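/- arXiv:1409.0496 — 4 statements merged into one kernel-verified Lean document; each statement's English description precedes it below -/
import Mathlib

section
/- If φ is a numbering with the Kolmogorov property, then for all but finitely many x ∈ MIN_φ it holds that C(x) ≥ |x| − log₂|x|. -/
/-- A numbering: a family of partial functions `φ_e : ℕ →. ℕ` such that the
two-variable map `(e, x) ↦ φ_e x` is partial recursive. -/
def Numbering' (φ : ℕ → ℕ →. ℕ) : Prop := Partrec₂ φ

/-- `φ` is acceptable: every numbering translates into it via a computable function. -/
def Acceptable (φ : ℕ → ℕ →. ℕ) : Prop :=
  ∀ ψ : ℕ → ℕ →. ℕ, Numbering' ψ → ∃ f : ℕ → ℕ, Computable f ∧ ∀ e, φ (f e) = ψ e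

/-- `φ` has the Kolmogorov property: every numbering translates into it with
linearly bounded (not necessarily computable) translation. -/
def KolmogorovProperty (φ : ℕ → ℕ →. ℕ) : Prop :=
  ∀ ψ : ℕ → ℕ →. ℕ, Numbering' ψ → ∃ c : ℕ, ∀ e, ∃ j, j ≤ c * e + c ∧ φ j = ψ e

/-- `φ` is computably bounded: every numbering translates into it with a
computable bound on the translated index. -/
def ComputablyBounded (φ : ℕ → ℕ →. ℕ) : Prop :=
  ∀ ψ : ℕ → ℕ →. ℕ, Numbering' ψ → ∃ f : ℕ → ℕ, Computable f ∧ ∀ e, ∃ j, j ≤ f e ∧ φ j = ψ e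

/-- `φ` is polynomially bounded with degree `p`. -/
def PolyBounded (φ : ℕ → ℕ →. ℕ) (p : ℕ) : Prop :=
  ∀ ψ : ℕ → ℕ →. ℕ, Numbering' ψ → ∃ c : ℕ, ∀ e, ∃ j, j ≤ c * e ^ p + c ∧ φ j = ψ e

/-- The set of `φ`-minimal indices. -/
def MINset (φ : ℕ → ℕ →. ℕ) : Set ℕ := {e | ∀ j < e, φ j ≠ φ e}

/-- Minimal indices of functions converging exactly on input 0. -/
def Mset (φ : ℕ → ℕ →. ℕ) : Set ℕ :=
  {e | e ∈ MINset φ ∧ (φ e 0).Dom ∧ ∀ x ≥ 1, ¬ (φ e x).Dom}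

/-- `minIndex φ e` is the minimal index computing the same function as `e`. -/
noncomputable def minIndex (φ : ℕ → ℕ →. ℕ) (e : ℕ) : ℕ := sInf {j | φ j = φ e}

/-- A partial recursive `U` is optimal: every partial recursive `V` is simulated
with only linear increase of programs. -/
def OptimalMachine (U : ℕ →. ℕ) : Prop :=
  Nat.Partrec U ∧ ∀ V : ℕ →. ℕ, Nat.Partrec V →
    ∃ c : ℕ, ∀ p, (V p).Dom → ∃ q, q ≤ c * p + c ∧ U q = V p

/-- Kolmogorov complexity of `x` with respect to `U`: the least binary length of
a `U`-program for `x`. (`Nat.size q` is the binary length of `q`.) -/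
noncomputable def Cpx (U : ℕ →. ℕ) (x : ℕ) : ℕ :=
  sInf {n | ∃ q, U q = Part.some x ∧ Nat.size q = n}

/-- Kolmogorov complexity of (the canonical code of) a finite set. -/
noncomputable def CpxFinset (U : ℕ →. ℕ) (A : Finset ℕ) : ℕ :=
  Cpx U (Encodable.encode A)

/-- `A` is `(m,k)`-recursive: a computable labelling of `k`-tuples that is
correct in at least `m` coordinates on every tuple. -/
def MKRecursive (m k : ℕ) (A : Set ℕ) : Prop :=
  ∃ f : (Fin k → ℕ) → Fin k → Bool, Computable f ∧
    ∀ x : Fin k → ℕ, m ≤ {i : Fin k | (f x i = true ↔ x i ∈ A)}.ncard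

private lemma aux_add_three_le_pow {L : ℕ} (hL : 3 ≤ L) : L + 3 ≤ 2 ^ L := by
  induction L with
  | zero => omega
  | succ n ih =>
    rcases Nat.lt_or_ge n 3 with h | h
    · interval_cases n <;> simp_all
    · have := ih h
      have : 1 ≤ 2 ^ n := Nat.one_le_two_pow
      rw [pow_succ]
      omega

/-- If `φ` has the Kolmogorov property then for all but finitely many
`x ∈ MIN_φ`, `C(x) ≥ |x| - log₂ |x|`  (`Nat.size x` is the binary length). -/
theorem complexity_ge_size_sub_log_on_MIN
    (φ : ℕ → ℕ →. ℕ) (hφ : Numbering' φ) (hK : KolmogorovProperty φ)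
    (U : ℕ →. ℕ) (hU : OptimalMachine U) :
    {x | x ∈ MINset φ ∧ Cpx U x < Nat.size x - Nat.log 2 (Nat.size x)}.Finite := by
  classical
  obtain ⟨hUpr, hUopt⟩ := hU
  -- the numbering `ψ_p = φ_{U p}`
  set ψ : ℕ → ℕ →. ℕ := fun p n => (U p).bind (fun e => φ e n) with hψdef
  have hψ : Numbering' ψ := by
    have h1 : Partrec (fun pn : ℕ × ℕ => U pn.1) :=
      (Partrec.nat_iff.2 hUpr).comp Computable.fst
    have h2 : Partrec₂ (fun (pn : ℕ × ℕ) (e : ℕ) => φ e pn.2) :=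
      hφ.comp Computable.snd (Computable.snd.comp Computable.fst)
    exact h1.bind h2
  obtain ⟨c, hc⟩ := hK ψ hψ
  set K := Nat.size c + 3 with hKdef
  apply Set.Finite.subset (Set.finite_Iio (2 ^ 2 ^ K))
  intro x hx
  by_contra hxN
  simp only [Set.mem_Iio, not_lt] at hxN
  obtain ⟨hxMIN, hxC⟩ := hx
  set s := Nat.size x with hsdef
  set L := Nat.log 2 s with hLdef
  -- basic size facts
  have h2Ks : 2 ^ K < s := Nat.lt_size.2 hxN
  have hs0 : s ≠ 0 := by omega
  have hKL : K ≤ L := (Nat.le_log_iff_pow_le (by norm_num) hs0).2 (le_of_lt h2Ks)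
  have h2L : 2 ^ L ≤ s := Nat.pow_log_le_self 2 hs0
  have hL3 : 3 ≤ L := by omega
  have hLs : L + 3 ≤ s := le_trans (aux_add_three_le_pow hL3) h2L
  -- a shortest program `q` with `U q = x`
  have hne : {n | ∃ q, U q = Part.some x ∧ Nat.size q = n}.Nonempty := by
    obtain ⟨c', hc'⟩ := hUopt (fun _ => Part.some x)
      (Partrec.nat_iff.1 (Partrec.const' (Part.some x)))
    obtain ⟨q, _, hq⟩ := hc' 0 trivial
    exact ⟨Nat.size q, q, hq, rfl⟩
  obtain ⟨q, hUq, hsq⟩ := Nat.sInf_mem hne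
  have hqC : Nat.size q = Cpx U x := hsq
  -- `ψ q = φ x`
  have hψq : ψ q = φ x := by
    funext n
    simp only [hψdef, hUq, Part.bind_some]
  -- translate: get `j ≤ c*q + c` with `φ j = φ x`, so `x ≤ c*q + c`
  obtain ⟨j, hj_le, hj_eq⟩ := hc q
  rw [hψq] at hj_eq
  have hxj : x ≤ j := by
    by_contra h
    exact hxMIN j (by omega) hj_eq
  have hxcq : x ≤ c * q + c := le_trans hxj hj_le
  -- size bounds
  have hq_sz : Nat.size q ≤ s - L - 1 := by omega
  have hq_lt : q < 2 ^ (s - L - 1) := Nat.size_le.1 hq_sz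
  have hc_lt : c < 2 ^ (K - 3) := by
    rw [hKdef]; simpa using Nat.lt_size_self c
  have hc_lt' : c < 2 ^ (L - 3) :=
    lt_of_lt_of_le hc_lt (Nat.pow_le_pow_right (by norm_num) (by omega))
  -- hence `x ≤ c*q + c < 2^(s-4) < 2^(s-1) ≤ x`, contradiction
  have hbig : 2 ^ (s - 1) ≤ x := Nat.lt_size.1 (by omega)
  have hmul : (c + 1) * (q + 1) ≤ 2 ^ (L - 3) * 2 ^ (s - L - 1) :=
    Nat.mul_le_mul hc_lt' hq_lt
  have hpow : 2 ^ (L - 3) * 2 ^ (s - L - 1) = 2 ^ (s - 4) := by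
    rw [← pow_add]
    congr 1
    omega
  have hlt : x < 2 ^ (s - 4) := by nlinarith [hmul, hpow, hxcq]
  have : (2 : ℕ) ^ (s - 4) ≤ 2 ^ (s - 1) :=
    Nat.pow_le_pow_right (by norm_num) (by omega)
  omega
end

section
/- For every computable order g (a computable, nondecreasing, unbounded function g : ℕ → ℕ) with g(0) ≥ 1, there exist an acceptable numbering ψ and a computable function f mapping each e ∈ ℕ to a finite set f(e) ⊆ ℕ of cardinality at most g(e) such that min_ψ(e) ∈ f(e) for all e. -/
open Denumerable Encodable

namespace SLaux

/-- Slowed-down index map. -/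
def slr (g : ℕ → ℕ) (e : ℕ) : ℕ :=
  Nat.rec (motive := fun _ => ℕ) 0 (fun n ih => min (ih + 1) (g (n + 1) - 1)) e

theorem slr_zero (g : ℕ → ℕ) : slr g 0 = 0 := rfl

theorem slr_succ (g : ℕ → ℕ) (e : ℕ) :
    slr g (e + 1) = min (slr g e + 1) (g (e + 1) - 1) := rfl

theorem slr_comp {g : ℕ → ℕ} (hg : Computable g) : Computable (slr g) := by
  have hh : Computable₂ (fun (_ : ℕ) (p : ℕ × ℕ) => min (p.2 + 1) (g (p.1 + 1) - 1)) := by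
    have h1 : Computable (fun q : ℕ × (ℕ × ℕ) => q.2.2 + 1) :=
      Computable.succ.comp (Computable.snd.comp Computable.snd)
    have h2 : Computable (fun q : ℕ × (ℕ × ℕ) => g (q.2.1 + 1) - 1) :=
      (Primrec.nat_sub.to_comp).comp
        (hg.comp (Computable.succ.comp (Computable.fst.comp Computable.snd)))
        (Computable.const 1)
    exact ((Primrec.nat_min.to_comp).comp h1 h2).to₂
  exact (Computable.nat_rec Computable.id (Computable.const 0) hh).of_eq fun n => by
    simp only []; rfl

section

variable {g : ℕ → ℕ} (hmono : Monotone g) (hub : ∀ m, ∃ n, m ≤ g n) (h0 : 1 ≤ g 0)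

include hmono hub h0

theorem slr_lt : ∀ e, slr g e < g e := by
  intro e
  cases e with
  | zero => rw [slr_zero]; omega
  | succ n =>
      have h1 : 1 ≤ g (n + 1) := le_trans h0 (hmono (Nat.zero_le _))
      have := min_le_right (slr g n + 1) (g (n + 1) - 1)
      rw [slr_succ]; omega

theorem slr_mono : Monotone (slr g) := by
  apply monotone_nat_of_le_succ
  intro n
  have h1 : slr g n < g n := slr_lt hmono hub h0 n
  have h2 : g n ≤ g (n + 1) := hmono (Nat.le_succ n)
  rw [slr_succ]; omega

theorem slr_unbounded : ∀ v, ∃ e, v ≤ slr g e := by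
  intro v
  induction v with
  | zero => exact ⟨0, Nat.zero_le _⟩
  | succ v ih =>
      obtain ⟨e, he⟩ := ih
      obtain ⟨N, hN⟩ := hub (v + 2)
      refine ⟨max N e + 1, ?_⟩
      have h1 : slr g e ≤ slr g (max N e) := slr_mono hmono hub h0 (le_max_right _ _)
      have h2 : g N ≤ g (max N e + 1) := hmono (le_trans (le_max_left _ _) (Nat.le_succ _))
      rw [slr_succ]; omega

theorem slr_surj : ∀ v, ∃ e, slr g e = v := by
  intro v
  obtain ⟨e, he⟩ := slr_unbounded hmono hub h0 v
  clear hub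
  induction e with
  | zero =>
      refine ⟨0, ?_⟩
      rw [slr_zero] at he ⊢
      omega
  | succ n ih =>
      by_cases h : v ≤ slr g n
      · exact ih h
      · refine ⟨n + 1, ?_⟩
        have h2 := min_le_left (slr g n + 1) (g (n + 1) - 1)
        rw [slr_succ] at he ⊢
        omega

/-- The first index of each block. -/
noncomputable def sinv (v : ℕ) : ℕ := Nat.find (slr_surj hmono hub h0 v)

theorem slr_sinv (v : ℕ) : slr g (sinv hmono hub h0 v) = v :=
  Nat.find_spec (slr_surj hmono hub h0 v)

theorem sinv_le {v j : ℕ} (h : slr g j = v) : sinv hmono hub h0 v ≤ j :=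
  Nat.find_min' _ h

theorem sinv_strictMono : StrictMono (sinv hmono hub h0) := by
  intro v w hvw
  by_contra h'
  push_neg at h'
  have := slr_mono hmono hub h0 h'
  rw [slr_sinv, slr_sinv] at this
  omega

theorem sinv_comp (hg : Computable g) : Computable (sinv hmono hub h0) := by
  have hdec : Computable₂ fun (v j : ℕ) => decide (slr g j = v) :=
    ((Primrec.eq (α := ℕ)).decide.to_comp.comp ((slr_comp hg).comp Computable.snd)
      Computable.fst).to₂
  have hpp : Partrec₂ fun (v j : ℕ) => (Part.some (decide (slr g j = v)) : Part Bool) :=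
    hdec.partrec₂
  refine (Partrec.rfind hpp).of_eq_tot fun v => ?_
  apply Nat.mem_rfind.2
  constructor
  · simp [slr_sinv hmono hub h0 v]
  · intro m hm
    simp only [Part.mem_some_iff]
    symm
    rw [decide_eq_false_iff_not]
    intro hc
    have := sinv_le hmono hub h0 hc
    omega

/-- Difference sequence for the increasing sequence `sinv`. -/
noncomputable def sc (j : ℕ) : ℕ :=
  Nat.rec (motive := fun _ => ℕ) (sinv hmono hub h0 0)
    (fun n _ => sinv hmono hub h0 (n + 1) - sinv hmono hub h0 n - 1) j

theorem sc_zero : sc hmono hub h0 0 = sinv hmono hub h0 0 := rfl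

theorem sc_succ (j : ℕ) :
    sc hmono hub h0 (j + 1) = sinv hmono hub h0 (j + 1) - sinv hmono hub h0 j - 1 := rfl

theorem sc_comp (hg : Computable g) : Computable (sc hmono hub h0) := by
  have hi := sinv_comp hmono hub h0 hg
  have hh : Computable₂ (fun (_ : ℕ) (p : ℕ × ℕ) =>
      sinv hmono hub h0 (p.1 + 1) - sinv hmono hub h0 p.1 - 1) := by
    have h1 : Computable (fun q : ℕ × (ℕ × ℕ) => sinv hmono hub h0 (q.2.1 + 1)) :=
      hi.comp (Computable.succ.comp (Computable.fst.comp Computable.snd))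
    have h2 : Computable (fun q : ℕ × (ℕ × ℕ) => sinv hmono hub h0 q.2.1) :=
      hi.comp (Computable.fst.comp Computable.snd)
    exact ((Primrec.nat_sub.to_comp).comp
      ((Primrec.nat_sub.to_comp).comp h1 h2) (Computable.const 1)).to₂
  exact (Computable.nat_rec Computable.id (Computable.const (sinv hmono hub h0 0)) hh).of_eq
    fun n => by simp only []; rfl

/-- `slist n = [sc 0, ..., sc (n-1)]`. -/
noncomputable def slist (n : ℕ) : List ℕ :=
  Nat.rec (motive := fun _ => List ℕ) [] (fun y ih => ih ++ [sc hmono hub h0 y]) n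

theorem slist_eq (n : ℕ) : slist hmono hub h0 n = (List.range n).map (sc hmono hub h0) := by
  induction n with
  | zero => rfl
  | succ n ih =>
      show slist hmono hub h0 n ++ [sc hmono hub h0 n] = _
      rw [ih, List.range_succ, List.map_append]; rfl

theorem slist_comp (hg : Computable g) : Computable (slist hmono hub h0) := by
  have hc := sc_comp hmono hub h0 hg
  have hh : Computable₂ (fun (_ : ℕ) (p : ℕ × List ℕ) => p.2 ++ [sc hmono hub h0 p.1]) :=
    ((Computable.list_concat).comp (Computable.snd.comp Computable.snd)
      (hc.comp (Computable.fst.comp Computable.snd))).to₂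
  exact (Computable.nat_rec Computable.id (Computable.const []) hh).of_eq
    fun n => by simp only []; rfl

theorem raise'_slist : ∀ (n j : ℕ),
    Denumerable.raise' ((List.range' (j + 1) n).map (sc hmono hub h0))
        (sinv hmono hub h0 j + 1)
      = (List.range' (j + 1) n).map (sinv hmono hub h0) := by
  intro n
  induction n with
  | zero => intro j; rfl
  | succ n ih =>
      intro j
      have hlt : sinv hmono hub h0 j < sinv hmono hub h0 (j + 1) :=
        sinv_strictMono hmono hub h0 (Nat.lt_succ_self j)
      rw [List.range'_succ, List.map_cons, List.map_cons, Denumerable.raise',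
        sc_succ]
      have h1 : sinv hmono hub h0 (j + 1) - sinv hmono hub h0 j - 1
          + (sinv hmono hub h0 j + 1) = sinv hmono hub h0 (j + 1) := by omega
      rw [h1]
      have := ih (j + 1)
      rw [show j + 1 + 1 = j + 2 from rfl] at this
      rw [this]

theorem raise'_slist_top (n : ℕ) :
    Denumerable.raise' (slist hmono hub h0 n) 0 = (List.range n).map (sinv hmono hub h0) := by
  rw [slist_eq]
  cases n with
  | zero => rfl
  | succ n =>
      rw [List.range_eq_range', List.range'_succ, List.map_cons, List.map_cons,
        Denumerable.raise', sc_zero, Nat.add_zero]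
      have := raise'_slist hmono hub h0 n 0
      rw [show (0 : ℕ) + 1 = 1 from rfl] at this
      rw [show sinv hmono hub h0 0 + 0 + 1 = sinv hmono hub h0 0 + 1 from by omega, this]

end

end SLaux

/-- For every computable order `g` with `g 0 ≥ 1` there is an acceptable
numbering `ψ` and a computable shortlist function of size at most `g(e)`
capturing `min_ψ(e)`. -/
theorem shortlist_of_order
    (g : ℕ → ℕ) (hg : Computable g) (hmono : Monotone g)
    (hub : ∀ m, ∃ n, m ≤ g n) (h0 : 1 ≤ g 0) :
    ∃ ψ : ℕ → ℕ →. ℕ, Numbering' ψ ∧ Acceptable ψ ∧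
      ∃ f : ℕ → Finset ℕ, Computable f ∧
        ∀ e, (f e).card ≤ g e ∧ minIndex ψ e ∈ f e := by
  classical
  have hr : Computable (SLaux.slr g) := SLaux.slr_comp hg
  have hinvC : Computable (SLaux.sinv hmono hub h0) := SLaux.sinv_comp hmono hub h0 hg
  have hrinv : ∀ v, SLaux.slr g (SLaux.sinv hmono hub h0 v) = v := SLaux.slr_sinv hmono hub h0
  refine ⟨fun e => Nat.Partrec.Code.eval (Denumerable.ofNat Nat.Partrec.Code (SLaux.slr g e)),
    ?_, ?_, ?_⟩
  · exact Nat.Partrec.Code.eval_part.comp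
      ((Computable.ofNat _).comp (hr.comp Computable.fst)) Computable.snd
  · intro χ hχ
    have h1 : Nat.Partrec (Nat.unpaired χ) := Partrec₂.unpaired'.2 hχ
    obtain ⟨c, hc⟩ := Nat.Partrec.Code.exists_code.1 h1
    obtain ⟨F, hFc, hFs⟩ := Nat.Partrec.Code.smn
    refine ⟨fun e => SLaux.sinv hmono hub h0 (Encodable.encode (F c e)), ?_, ?_⟩
    · exact hinvC.comp (Computable.encode.comp (hFc.comp (Computable.const c) Computable.id))
    · intro e
      show Nat.Partrec.Code.eval (Denumerable.ofNat Nat.Partrec.Code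
        (SLaux.slr g (SLaux.sinv hmono hub h0 (Encodable.encode (F c e))))) = χ e
      rw [hrinv, Denumerable.ofNat_encode]
      funext x
      rw [hFs, hc]
      simp [Nat.unpaired]
  · refine ⟨fun e => Denumerable.ofNat (Finset ℕ)
      (Encodable.encode (SLaux.slist hmono hub h0 (SLaux.slr g e + 1))), ?_, ?_⟩
    · exact (Computable.ofNat (Finset ℕ)).comp (Computable.encode.comp
        ((SLaux.slist_comp hmono hub h0 hg).comp (Computable.succ.comp hr)))
    · intro e
      beta_reduce
      have hfe : Denumerable.ofNat (Finset ℕ)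
          (Encodable.encode (SLaux.slist hmono hub h0 (SLaux.slr g e + 1)))
          = Finset.map (Denumerable.eqv ℕ).symm.toEmbedding
            (Denumerable.raise'Finset (SLaux.slist hmono hub h0 (SLaux.slr g e + 1)) 0) := by
        rw [show Denumerable.ofNat (Finset ℕ)
            (Encodable.encode (SLaux.slist hmono hub h0 (SLaux.slr g e + 1)))
            = Finset.map (Denumerable.eqv ℕ).symm.toEmbedding
              (Denumerable.raise'Finset (Denumerable.ofNat (List ℕ)
                (Encodable.encode (SLaux.slist hmono hub h0 (SLaux.slr g e + 1)))) 0) from rfl,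
          Denumerable.ofNat_encode]
      have hval : (Denumerable.raise'Finset (SLaux.slist hmono hub h0 (SLaux.slr g e + 1)) 0).val
          = ((List.range (SLaux.slr g e + 1)).map (SLaux.sinv hmono hub h0) : Multiset ℕ) := by
        show (↑(Denumerable.raise' (SLaux.slist hmono hub h0 (SLaux.slr g e + 1)) 0) : Multiset ℕ)
          = _
        rw [SLaux.raise'_slist_top]
      constructor
      · rw [hfe, Finset.card_map, Finset.card_def, hval]
        have : ((List.range (SLaux.slr g e + 1)).map (SLaux.sinv hmono hub h0)).length
            = SLaux.slr g e + 1 := by simp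
        rw [Multiset.coe_card, this]
        have := SLaux.slr_lt hmono hub h0 e
        omega
      · -- minimal index analysis
        set m := minIndex (fun e => Nat.Partrec.Code.eval
          (Denumerable.ofNat Nat.Partrec.Code (SLaux.slr g e))) e with hmdef
        have hmem : m ∈ {j | Nat.Partrec.Code.eval (Denumerable.ofNat Nat.Partrec.Code
            (SLaux.slr g j)) = Nat.Partrec.Code.eval (Denumerable.ofNat Nat.Partrec.Code
            (SLaux.slr g e))} := by
          rw [hmdef]
          exact Nat.sInf_mem ⟨e, rfl⟩
        have hle : m ≤ e := by
          rw [hmdef]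
          exact Nat.sInf_le rfl
        have heq : m = SLaux.sinv hmono hub h0 (SLaux.slr g m) := by
          have h1 : SLaux.sinv hmono hub h0 (SLaux.slr g m) ≤ m :=
            SLaux.sinv_le hmono hub h0 rfl
          have h2 : m ≤ SLaux.sinv hmono hub h0 (SLaux.slr g m) := by
            rw [hmdef]
            apply Nat.sInf_le
            show Nat.Partrec.Code.eval (Denumerable.ofNat Nat.Partrec.Code
              (SLaux.slr g (SLaux.sinv hmono hub h0 (SLaux.slr g m)))) = _
            rw [hrinv]
            exact hmem
          omega
        have hrm : SLaux.slr g m ≤ SLaux.slr g e := SLaux.slr_mono hmono hub h0 hle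
        rw [hfe, Finset.mem_map]
        refine ⟨m, ?_, ?_⟩
        · rw [Finset.mem_def, hval, Multiset.mem_coe, List.mem_map]
          exact ⟨SLaux.slr g m, List.mem_range.2 (by omega), heq.symm⟩
        · show (Denumerable.eqv ℕ).symm m = m
          simp [Denumerable.eqv]
end

section
/- For every computably bounded numbering φ, the set MIN_φ is immune: MIN_φ is infinite and has no infinite computably enumerable subset. -/
open Nat.Partrec (Code) in
open Nat.Partrec.Code in
lemma MIN_aux_infinite (φ : ℕ → ℕ →. ℕ)
    (hcb : ∀ ψ : ℕ → ℕ →. ℕ, Partrec₂ ψ →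
      ∃ f : ℕ → ℕ, Computable f ∧ ∀ e, ∃ j, j ≤ f e ∧ φ j = ψ e) :
    Set.Infinite {e | ∀ j < e, φ j ≠ φ e} := by
  classical
  set ψ : ℕ → ℕ →. ℕ := fun e _ => Part.some e with hψdef
  have hψ : Partrec₂ ψ := Computable.fst
  obtain ⟨f, -, hf⟩ := hcb ψ hψ
  have hne : ∀ e : ℕ, {j | φ j = ψ e}.Nonempty := by
    intro e
    obtain ⟨j, -, hj⟩ := hf e
    exact ⟨j, hj⟩
  set M : ℕ → ℕ := fun e => sInf {j | φ j = ψ e} with hMdef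
  have hM : ∀ e, φ (M e) = ψ e := fun e => Nat.sInf_mem (hne e)
  have hmem : ∀ e, M e ∈ {e | ∀ j < e, φ j ≠ φ e} := by
    intro e j hj hje
    have : M e ≤ j := Nat.sInf_le (by rw [Set.mem_setOf_eq, hje, hM e])
    omega
  have hinj : Function.Injective M := by
    intro e e' hee
    have : ψ e = ψ e' := by rw [← hM e, hee, hM e']
    have := congrFun this 0
    simpa [hψdef] using this
  exact Set.infinite_of_injective_forall_mem hinj hmem

open Nat.Partrec (Code) in
open Nat.Partrec.Code in
lemma MIN_aux_immune (φ : ℕ → ℕ →. ℕ) (hφ : Partrec₂ φ)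
    (hcb : ∀ ψ : ℕ → ℕ →. ℕ, Partrec₂ ψ →
      ∃ f : ℕ → ℕ, Computable f ∧ ∀ e, ∃ j, j ≤ f e ∧ φ j = ψ e)
    (g : ℕ →. ℕ) (hg : Nat.Partrec g)
    (hsub : g.Dom ⊆ {e | ∀ j < e, φ j ≠ φ e}) : g.Dom.Finite := by
  classical
  by_contra hfin
  have hW : g.Dom.Infinite := hfin
  obtain ⟨cg, hcg⟩ := exists_code.1 hg
  -- the search predicate
  set p : ℕ → ℕ → Bool := fun b k =>
    (evaln k.unpair.2 cg k.unpair.1).isSome && decide (b < k.unpair.1) with hpdef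
  have hp : Computable₂ p := by
    have hev : Primrec fun q : ℕ × ℕ => (evaln q.2.unpair.2 cg q.2.unpair.1).isSome :=
      Primrec.option_isSome.comp (primrec_evaln.comp
        (((Primrec.snd.comp (Primrec.unpair.comp Primrec.snd)).pair (Primrec.const cg)).pair
          (Primrec.fst.comp (Primrec.unpair.comp Primrec.snd))))
    have hlt : Primrec fun q : ℕ × ℕ => decide (q.1 < q.2.unpair.1) :=
      (Primrec.nat_lt.comp Primrec.fst (Primrec.fst.comp (Primrec.unpair.comp Primrec.snd))).decide
    have : Primrec₂ p := by
      have := hev.cond hlt (Primrec.const false)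
      refine Primrec.of_eq this ?_
      intro q
      by_cases h1 : (evaln q.2.unpair.2 cg q.2.unpair.1).isSome <;> simp [hpdef, h1]
    exact this.to_comp
  -- the search function
  set search : ℕ →. ℕ :=
    fun b => (Nat.rfind fun k => Part.some (p b k)).map (fun k => k.unpair.1) with hsdef
  have hsearch_pr : Partrec search := by
    have h1 : Partrec₂ fun b k => (Part.some (p b k) : Part Bool) := hp
    exact (Partrec.rfind h1).map
      ((Computable.fst.comp (Computable.unpair.comp Computable.snd)).to₂)
  have hsearch : ∀ b, ∃ w, w ∈ search b ∧ (g w).Dom ∧ b < w := by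
    intro b
    obtain ⟨w, hwdom, hbw⟩ := hW.exists_gt b
    have hwdom' : (g w).Dom := hwdom
    obtain ⟨y, hy⟩ := Part.dom_iff_mem.1 hwdom'
    rw [← hcg] at hy
    obtain ⟨t, ht⟩ := evaln_complete.1 hy
    have hdom : (Nat.rfind fun k => Part.some (p b k)).Dom := by
      apply Nat.rfind_dom.2
      refine ⟨Nat.pair w t, ?_, fun {m} _ => trivial⟩
      have : (evaln t cg w).isSome := by
        rw [Option.isSome_iff_exists]; exact ⟨y, ht⟩
      simp [hpdef, Nat.unpair_pair, this, hbw]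
    obtain ⟨k, hk⟩ := Part.dom_iff_mem.1 hdom
    have hk1 : p b k = true := by simpa using Nat.rfind_spec hk
    rw [hpdef, Bool.and_eq_true, decide_eq_true_eq] at hk1
    obtain ⟨z, hz⟩ := Option.isSome_iff_exists.1 hk1.1
    refine ⟨k.unpair.1, ?_, ?_, hk1.2⟩
    · rw [hsdef]
      exact Part.mem_map (fun k => k.unpair.1) hk
    · rw [← hcg] at *
      exact Part.dom_iff_mem.2 ⟨z, evaln_sound hz⟩
  -- the diagonal numbering
  set h : ℕ →. ℕ :=
    fun n => (eval (Denumerable.ofNat Code n.unpair.1) n.unpair.2).bind search with hhdef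
  have hhp : Partrec h :=
    (eval_part.comp ((Computable.ofNat Code).comp (Computable.fst.comp Computable.unpair))
      (Computable.snd.comp Computable.unpair)).bind
      ((hsearch_pr.comp Computable.snd).to₂)
  set ψ : ℕ → ℕ →. ℕ := fun n x => (h n).bind fun w => φ w x with hψdef
  have hψ : Partrec₂ ψ := by
    have hg2 : Partrec fun q : (ℕ × ℕ) × ℕ => φ q.2 q.1.2 :=
      hφ.comp Computable.snd (Computable.snd.comp Computable.fst)
    exact (hhp.comp Computable.fst).bind hg2.to₂
  obtain ⟨f, hfc, hf⟩ := hcb ψ hψ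
  -- fixed point
  have hF0 : Computable fun q : Code × ℕ => f (Nat.pair (Encodable.encode q.1) q.2) :=
    hfc.comp (Primrec₂.natPair.to_comp.comp
      (Computable.encode.comp Computable.fst) Computable.snd)
  have hF : Partrec₂ fun (c : Code) (e : ℕ) =>
      (Part.some (f (Nat.pair (Encodable.encode c) e)) : Part ℕ) := hF0
  obtain ⟨c0, hc0⟩ := fixed_point₂ hF
  set n := Nat.pair (Encodable.encode c0) 0 with hndef
  have h1 : h n = search (f n) := by
    rw [hhdef]
    simp only [hndef, Nat.unpair_pair, Denumerable.ofNat_encode, hc0]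
    exact Part.bind_some _ search
  obtain ⟨w, hwmem, hwdom, hwgt⟩ := hsearch (f n)
  have hsome : search (f n) = Part.some w := Part.eq_some_iff.2 hwmem
  have hψn : ψ n = φ w := by
    funext x
    rw [hψdef]
    simp [h1, hsome]
  obtain ⟨j, hjle, hj⟩ := hf n
  have hwmin : ∀ j < w, φ j ≠ φ w := hsub hwdom
  exact hwmin j (lt_of_le_of_lt hjle hwgt) (hj.trans hψn)

/-- For every computably bounded numbering, `MIN_φ` is immune: it is infinite
and has no infinite computably enumerable subset. -/
theorem MIN_immune
    (φ : ℕ → ℕ →. ℕ) (hφ : Numbering' φ) (hcb : ComputablyBounded φ) :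
    (MINset φ).Infinite ∧
      ∀ g : ℕ →. ℕ, Nat.Partrec g → g.Dom ⊆ MINset φ → g.Dom.Finite := by
  exact ⟨MIN_aux_infinite φ hcb, fun g hg hsub => MIN_aux_immune φ hφ hcb g hg hsub⟩
end

section
/- For every computably bounded numbering φ, the set MIN_φ is Turing equivalent to the set E = {⟨d,e⟩ : ψ_d = ψ_e}, where ψ is a fixed standard acceptable numbering of the partial recursive functions and ⟨·,·⟩ is a computable pairing function; that is, MIN_φ ≤_T E and E ≤_T MIN_φ. (Since E is Turing equivalent to ∅'', this says MIN_φ ≡_T ∅''.) -/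
/-- Partial recursive relative to an oracle `O : ℕ →. ℕ` (mirrors `Nat.Partrec`
with an extra base case for the oracle). -/
inductive RecursiveIn' (O : ℕ →. ℕ) : (ℕ →. ℕ) → Prop
  | zero : RecursiveIn' O (pure 0)
  | succ : RecursiveIn' O ↑Nat.succ
  | left : RecursiveIn' O ↑fun n : ℕ => n.unpair.1
  | right : RecursiveIn' O ↑fun n : ℕ => n.unpair.2
  | oracle : RecursiveIn' O O
  | pair {f g} : RecursiveIn' O f → RecursiveIn' O g →
      RecursiveIn' O fun n => Nat.pair <$> f n <*> g n
  | comp {f g} : RecursiveIn' O f → RecursiveIn' O g →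
      RecursiveIn' O fun n => g n >>= f
  | prec {f g} : RecursiveIn' O f → RecursiveIn' O g →
      RecursiveIn' O (Nat.unpaired fun a n =>
        n.rec (f a) fun y IH => do let i ← IH; g (Nat.pair a (Nat.pair y i)))
  | rfind {f} : RecursiveIn' O f →
      RecursiveIn' O fun a => Nat.rfind fun n => (fun m => m = 0) <$> f (Nat.pair a n)

/-- The characteristic function of a set of naturals, as a partial function. -/
noncomputable def chi (A : Set ℕ) : ℕ →. ℕ :=
  fun n => Part.some (A.indicator (fun _ => 1) n)

/-- Turing reducibility between sets of naturals: the characteristic function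
of `A` is partial recursive relative to the characteristic function of `B`. -/
noncomputable def TuringLE (A B : Set ℕ) : Prop := RecursiveIn' (chi B) (chi A)

/-- The standard acceptable numbering of the partial recursive functions,
via Gödel codes. -/
def stdNumbering (e : ℕ) : ℕ →. ℕ := (Denumerable.ofNat Nat.Partrec.Code e).eval

/-- The halting set. -/
def haltingSet : Set ℕ := {e | (stdNumbering e e).Dom}

/-- The index set of equality of partial recursive functions (a set Turing
equivalent to the double jump of the empty set). -/
def eqSet : Set ℕ :=
  {n | stdNumbering n.unpair.1 = stdNumbering n.unpair.2}


open Encodable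

namespace Meyer

theorem recIn_of_eq {O f g : ℕ →. ℕ} (hf : RecursiveIn' O f) (H : ∀ n, f n = g n) :
    RecursiveIn' O g := (funext H : f = g) ▸ hf

theorem recIn_of_partrec {O f : ℕ →. ℕ} (h : Nat.Partrec f) : RecursiveIn' O f := by
  induction h with
  | zero => exact .zero
  | succ => exact .succ
  | left => exact .left
  | right => exact .right
  | pair _ _ ih1 ih2 => exact .pair ih1 ih2
  | comp _ _ ih1 ih2 => exact .comp ih1 ih2
  | prec _ _ ih1 ih2 => exact .prec ih1 ih2
  | rfind _ ih => exact .rfind ih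

theorem recIn_of_computable {O : ℕ →. ℕ} {f : ℕ → ℕ} (hf : Computable f) :
    RecursiveIn' O ↑f := recIn_of_partrec (Partrec.nat_iff.1 hf)

theorem recIn_trans {O O' f : ℕ →. ℕ} (h : RecursiveIn' O f) (hO : RecursiveIn' O' O) :
    RecursiveIn' O' f := by
  induction h with
  | zero => exact .zero
  | succ => exact .succ
  | left => exact .left
  | right => exact .right
  | oracle => exact hO
  | pair _ _ ih1 ih2 => exact .pair ih1 ih2
  | comp _ _ ih1 ih2 => exact .comp ih1 ih2
  | prec _ _ ih1 ih2 => exact .prec ih1 ih2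
  | rfind _ ih => exact .rfind ih

/-- indicator as a ℕ-valued function -/
noncomputable def indN (A : Set ℕ) (k : ℕ) : ℕ := A.indicator (fun _ => 1) k

lemma chi_eq (A : Set ℕ) (n : ℕ) : chi A n = Part.some (indN A n) := rfl

lemma indN_eq (A : Set ℕ) (k : ℕ) [Decidable (k ∈ A)] :
    indN A k = if k ∈ A then 1 else 0 := by
  classical
  simp [indN, Set.indicator_apply]

noncomputable def segL (A : Set ℕ) (n : ℕ) : List ℕ := (List.range n).map (indN A)

noncomputable def seg (A : Set ℕ) (n : ℕ) : ℕ := encode (segL A n)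

def bitAt (σ k : ℕ) : ℕ := ((decode (α := List ℕ) σ).getD []).getD k 0

lemma bit_seg {A : Set ℕ} {n k : ℕ} (h : k < n) : bitAt (seg A n) k = indN A k := by
  simp [bitAt, seg, segL, encodek, List.getD_eq_getElem?_getD, List.getElem?_range h]

end Meyer

namespace Meyer2
open Meyer

/-- one oracle query at a computable position -/
theorem recIn_chiQuery {A : Set ℕ} {f : ℕ → ℕ} (hf : Computable f) :
    RecursiveIn' (chi A) (fun n => chi A (f n)) := by
  refine recIn_of_eq (RecursiveIn'.comp .oracle (recIn_of_computable hf)) ?_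
  intro n
  simp [PFun.coe_val, Part.bind_eq_bind]
  exact Part.bind_some _ _

noncomputable def segStep (A : Set ℕ) : ℕ →. ℕ :=
  fun m => chi A m.unpair.2.unpair.1 >>= fun b =>
    Part.some (encode (((decode (α := List ℕ) m.unpair.2.unpair.2).getD []) ++ [b]))

theorem segStep_recIn (A : Set ℕ) : RecursiveIn' (chi A) (segStep A) := by
  have hY : Computable (fun m : ℕ => m.unpair.2.unpair.1) :=
    (Computable.fst.comp Computable.unpair).comp (Computable.snd.comp Computable.unpair)
  have hpost : Computable (fun q : ℕ =>
      encode (((decode (α := List ℕ) (q.unpair.1.unpair.2.unpair.2)).getD []) ++ [q.unpair.2])) := by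
    have hI : Computable (fun q : ℕ => q.unpair.1.unpair.2.unpair.2) :=
      (Computable.snd.comp Computable.unpair).comp
        ((Computable.snd.comp Computable.unpair).comp (Computable.fst.comp Computable.unpair))
    have hB : Computable (fun q : ℕ => q.unpair.2) := Computable.snd.comp Computable.unpair
    exact Computable.encode.comp
      ((Primrec.list_concat.to_comp).comp
        ((Primrec.option_getD.to_comp).comp (Computable.decode.comp hI) (Computable.const []))
        hB)
  have inner : RecursiveIn' (chi A)
      (fun m => Nat.pair <$> (↑(fun n : ℕ => n) : ℕ →. ℕ) m <*> (fun k => chi A (m.unpair.2.unpair.1)) m) := by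
    exact RecursiveIn'.pair (recIn_of_computable Computable.id) (recIn_chiQuery hY)
  refine recIn_of_eq (RecursiveIn'.comp (recIn_of_computable hpost) inner) ?_
  intro m
  simp [segStep, PFun.coe_val, Seq.seq, chi_eq, Nat.unpair_pair, Part.bind_eq_bind]
  exact (Part.bind_some _ _).trans (by simp [PFun.coe_val, Nat.unpair_pair])

theorem seg_recIn (A : Set ℕ) : RecursiveIn' (chi A) (fun n => Part.some (seg A n)) := by
  have base : RecursiveIn' (chi A) ↑(fun _ : ℕ => encode ([] : List ℕ)) :=
    recIn_of_computable (Computable.const _)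
  have hP := RecursiveIn'.prec base (segStep_recIn A)
  have hpair : Computable (fun n : ℕ => Nat.pair 0 n) :=
    Primrec.to_comp (Primrec₂.natPair.comp (Primrec.const 0) Primrec.id)
  have key : ∀ n : ℕ,
      (n.rec ((↑(fun _ : ℕ => encode ([] : List ℕ)) : ℕ →. ℕ) 0)
        (fun y IH => IH >>= fun i => segStep A (Nat.pair 0 (Nat.pair y i))) : Part ℕ)
      = Part.some (seg A n) := by
    intro n
    induction n with
    | zero => simp [PFun.coe_val, seg, segL]
    | succ n ih =>
        simp only [ih]
        simp [segStep, Nat.unpair_pair, chi_eq, seg, segL, List.range_succ, encodek]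
  refine recIn_of_eq (RecursiveIn'.comp hP (recIn_of_computable hpair)) ?_
  intro n
  have h0 : ∀ m : ℕ, (↑(fun n : ℕ => Nat.pair 0 n) : ℕ →. ℕ) m = Part.some (Nat.pair 0 m) :=
    fun m => rfl
  rw [h0]
  simp only [Part.bind_eq_bind, Part.bind_some, Nat.unpaired, Nat.unpair_pair]
  exact key n

/-- master lemma: query an initial segment of the oracle set, then continue with `u`. -/
theorem recIn_segQuery {O : ℕ →. ℕ} {A : Set ℕ}
    (hseg : RecursiveIn' O (fun n => Part.some (seg A n)))
    {u : ℕ →. ℕ} (hu : RecursiveIn' O u) {h : ℕ → ℕ} (hh : Computable h) :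
    RecursiveIn' O (fun n => u (Nat.pair n (seg A (h n)))) := by
  have h1 : RecursiveIn' O (fun n => Part.some (seg A (h n))) := by
    refine recIn_of_eq (RecursiveIn'.comp hseg (recIn_of_computable hh)) ?_
    intro n; simp [PFun.coe_val]
  have h2 : RecursiveIn' O (fun n => Nat.pair <$> (↑(fun k : ℕ => k) : ℕ →. ℕ) n
      <*> (fun k => Part.some (seg A (h k))) n) :=
    RecursiveIn'.pair (recIn_of_computable Computable.id) h1
  refine recIn_of_eq (RecursiveIn'.comp hu h2) ?_
  intro n
  simp [PFun.coe_val, Seq.seq, Part.bind_eq_bind]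
  exact Part.bind_some _ _

end Meyer2

namespace Meyer3

/-- bounded existential -/
def bAny (n : ℕ) (p : ℕ → Bool) : Bool := n.rec false (fun y IH => IH || p y)
/-- bounded count -/
def bCnt (n : ℕ) (p : ℕ → Bool) : ℕ := n.rec 0 (fun y IH => IH + (bif p y then 1 else 0))
/-- bounded max -/
def bMaxF (n : ℕ) (p : ℕ → ℕ) : ℕ := n.rec 0 (fun y IH => max IH (p y))
/-- picks the largest k < n with p k (or 0) -/
def bPick (n : ℕ) (p : ℕ → Bool) : ℕ := n.rec 0 (fun y IH => bif p y then y else IH)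

lemma bAny_iff {n p} : bAny n p = true ↔ ∃ k, k < n ∧ p k = true := by
  induction n with
  | zero => simp [bAny]
  | succ n ih =>
      simp only [bAny] at ih ⊢
      rw [Bool.or_eq_true, ih]
      constructor
      · rintro (⟨k, hk, hp⟩ | hp)
        · exact ⟨k, Nat.lt_succ_of_lt hk, hp⟩
        · exact ⟨n, Nat.lt_succ_self n, hp⟩
      · rintro ⟨k, hk, hp⟩
        rcases Nat.lt_succ_iff_lt_or_eq.1 hk with h | rfl
        · exact Or.inl ⟨k, h, hp⟩
        · exact Or.inr hp

lemma bMaxF_le {n p k} (h : k < n) : p k ≤ bMaxF n p := by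
  induction n with
  | zero => omega
  | succ n ih =>
      rcases Nat.lt_succ_iff_lt_or_eq.1 h with h' | rfl
      · exact le_trans (ih h') (le_max_left _ _)
      · exact le_max_right _ _

lemma bCnt_succ {n p} : bCnt (n+1) p = bCnt n p + (bif p n then 1 else 0) := rfl
lemma bPick_succ {n p} : bPick (n+1) p = (bif p n then n else bPick n p) := rfl

lemma bCnt_eq_zero {n p} (h : ∀ k, k < n → p k = false) : bCnt n p = 0 := by
  induction n with
  | zero => rfl
  | succ n ih =>
      rw [bCnt_succ, h n (Nat.lt_succ_self n), ih (fun k hk => h k (Nat.lt_succ_of_lt hk))]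
      rfl

lemma bCnt_pos {n p k} (hk : k < n) (hp : p k = true) : 0 < bCnt n p := by
  induction n with
  | zero => omega
  | succ n ih =>
      rw [bCnt_succ]
      rcases Nat.lt_succ_iff_lt_or_eq.1 hk with h' | rfl
      · have := ih h'; omega
      · rw [hp]; simp

lemma bCnt_eq_one {n p k} (hk : k < n) (hp : p k = true)
    (hu : ∀ j, j < n → p j = true → j = k) : bCnt n p = 1 := by
  induction n with
  | zero => omega
  | succ n ih =>
      rw [bCnt_succ]
      rcases Nat.lt_succ_iff_lt_or_eq.1 hk with h' | rfl
      · have hn : p n = false := by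
          by_contra h
          have := hu n (Nat.lt_succ_self n) (by simpa using h)
          omega
        rw [hn, ih h' (fun j hj hpj => hu j (Nat.lt_succ_of_lt hj) hpj)]
        rfl
      · rw [hp]
        have hz : bCnt k p = 0 := bCnt_eq_zero (fun j hj => by
          by_contra h
          have := hu j (Nat.lt_succ_of_lt hj) (by simpa using h)
          omega)
        rw [hz]
        rfl

lemma bPick_eq {n p k} (hk : k < n) (hp : p k = true)
    (hu : ∀ j, j < n → p j = true → j = k) : bPick n p = k := by
  induction n with
  | zero => omega
  | succ n ih =>
      rw [bPick_succ]
      rcases Nat.lt_succ_iff_lt_or_eq.1 hk with h' | rfl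
      · have hn : p n = false := by
          by_contra h
          have := hu n (Nat.lt_succ_self n) (by simpa using h)
          omega
        rw [hn]
        exact ih h' (fun j hj hpj => hu j (Nat.lt_succ_of_lt hj) hpj)
      · rw [hp]
        rfl

section PrimrecLemmas
open Primrec

variable {α : Type*} [Primcodable α]

lemma primrec_bAny {p : α → ℕ → Bool} (hp : Primrec₂ p) :
    Primrec₂ fun a n => bAny n (p a) := by
  have : Primrec₂ fun (a : α) (q : ℕ × Bool) => q.2 || p a q.1 :=
    Primrec.or.comp₂ (snd.comp snd).to₂ (hp.comp fst (fst.comp snd)).to₂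
  exact (Primrec.nat_rec (Primrec.const false) this).to₂

lemma primrec_bCnt {p : α → ℕ → Bool} (hp : Primrec₂ p) :
    Primrec₂ fun a n => bCnt n (p a) := by
  have : Primrec₂ fun (a : α) (q : ℕ × ℕ) => q.2 + (bif p a q.1 then 1 else 0) :=
    (nat_add.comp (snd.comp snd)
      (Primrec.cond (hp.comp fst (fst.comp snd)) (const 1) (const 0))).to₂
  exact (Primrec.nat_rec (Primrec.const 0) this).to₂

lemma primrec_bMaxF {p : α → ℕ → ℕ} (hp : Primrec₂ p) :
    Primrec₂ fun a n => bMaxF n (p a) := by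
  have : Primrec₂ fun (a : α) (q : ℕ × ℕ) => max q.2 (p a q.1) :=
    (nat_max.comp (snd.comp snd) (hp.comp fst (fst.comp snd))).to₂
  exact (Primrec.nat_rec (Primrec.const 0) this).to₂

lemma primrec_bPick {p : α → ℕ → Bool} (hp : Primrec₂ p) :
    Primrec₂ fun a n => bPick n (p a) := by
  have : Primrec₂ fun (a : α) (q : ℕ × ℕ) => bif p a q.1 then q.1 else q.2 :=
    (Primrec.cond (hp.comp fst (fst.comp snd)) (fst.comp snd) (snd.comp snd)).to₂
  exact (Primrec.nat_rec (Primrec.const 0) this).to₂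

lemma primrec_bitAt : Primrec₂ Meyer.bitAt := by
  unfold Meyer.bitAt
  exact (Primrec.list_getD 0).comp
    (Primrec.option_getD.comp (Primrec.decode.comp fst) (const [])) snd

end PrimrecLemmas

end Meyer3


namespace Meyer4
open Meyer Meyer2 Meyer3 Encodable Nat.Partrec.Code
open Nat.Partrec (Code)

/-- translation of `φ`-indices into standard codes -/
def gIdx (c : Code) (e : ℕ) : ℕ := encode (c.curry e)

lemma primrec_gIdx (c : Code) : Primrec (gIdx c) :=
  Primrec.encode.comp (primrec₂_curry.comp (Primrec.const c) Primrec.id)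

lemma std_gIdx {φ : ℕ → ℕ →. ℕ} {c : Code}
    (hc : c.eval = fun m : ℕ => φ m.unpair.1 m.unpair.2) (e : ℕ) :
    stdNumbering (gIdx c e) = φ e := by
  funext x
  have h1 : stdNumbering (gIdx c e) = (c.curry e).eval := by
    unfold stdNumbering gIdx
    rw [Denumerable.ofNat_encode]
  rw [h1]
  have := eval_curry c e x
  rw [this, hc]
  simp

lemma indN_eq_one {A : Set ℕ} {k : ℕ} : indN A k = 1 ↔ k ∈ A := by
  classical
  rw [indN_eq]
  split <;> simp_all

/-- gets a numbering's uncurried code -/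
lemma numbering_code {φ : ℕ → ℕ →. ℕ} (hφ : Numbering' φ) :
    ∃ c : Code, c.eval = fun m : ℕ => φ m.unpair.1 m.unpair.2 :=
  exists_code.1 (Partrec.nat_iff.1 ((hφ : Partrec₂ φ).comp
    (Computable.fst.comp Computable.unpair) (Computable.snd.comp Computable.unpair)))

def d1val (c : Code) (m : ℕ) : ℕ :=
  bif bAny m.unpair.1
    (fun j => Meyer.bitAt m.unpair.2 (Nat.pair (gIdx c j) (gIdx c m.unpair.1)) == 1)
  then 0 else 1

def d1H (c : Code) (e : ℕ) : ℕ := bMaxF e (fun j => Nat.pair (gIdx c j) (gIdx c e)) + 1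

lemma primrec_d1val (c : Code) : Primrec (d1val c) := by
  have pe : Primrec (fun m : ℕ => m.unpair.1) := Primrec.fst.comp Primrec.unpair
  have pσ : Primrec (fun m : ℕ => m.unpair.2) := Primrec.snd.comp Primrec.unpair
  have hp : Primrec₂ (fun m j : ℕ =>
      Meyer.bitAt m.unpair.2 (Nat.pair (gIdx c j) (gIdx c m.unpair.1)) == 1) :=
    (Primrec.beq.comp
      (primrec_bitAt.comp (pσ.comp Primrec.fst)
        (Primrec₂.natPair.comp ((primrec_gIdx c).comp Primrec.snd)
          ((primrec_gIdx c).comp (pe.comp Primrec.fst))))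
      (Primrec.const 1)).to₂
  exact Primrec.cond ((primrec_bAny hp).comp Primrec.id pe) (Primrec.const 0) (Primrec.const 1)

lemma primrec_d1H (c : Code) : Primrec (d1H c) := by
  have hp : Primrec₂ (fun e j : ℕ => Nat.pair (gIdx c j) (gIdx c e)) :=
    (Primrec₂.natPair.comp ((primrec_gIdx c).comp Primrec.snd)
      ((primrec_gIdx c).comp Primrec.fst)).to₂
  exact Primrec.succ.comp ((primrec_bMaxF hp).comp Primrec.id Primrec.id)

theorem dir1 (φ : ℕ → ℕ →. ℕ) (hφ : Numbering' φ) : TuringLE (MINset φ) eqSet := by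
  classical
  obtain ⟨c, hc⟩ := numbering_code hφ
  have hF : RecursiveIn' (chi eqSet)
      (fun e => (↑(d1val c) : ℕ →. ℕ) (Nat.pair e (seg eqSet (d1H c e)))) :=
    recIn_segQuery (seg_recIn eqSet) (recIn_of_computable (primrec_d1val c).to_comp)
      (primrec_d1H c).to_comp
  unfold TuringLE
  refine recIn_of_eq hF ?_
  intro e
  rw [chi_eq]
  show Part.some (d1val c (Nat.pair e (seg eqSet (d1H c e)))) = _
  congr 1
  have hbit : ∀ j, j < e →
      Meyer.bitAt (seg eqSet (d1H c e)) (Nat.pair (gIdx c j) (gIdx c e)) = indN eqSet (Nat.pair (gIdx c j) (gIdx c e)) := by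
    intro j hj
    exact bit_seg (Nat.lt_succ_of_le (bMaxF_le (p := fun j => Nat.pair (gIdx c j) (gIdx c e)) hj))
  have key : bAny e (fun j => Meyer.bitAt (seg eqSet (d1H c e)) (Nat.pair (gIdx c j) (gIdx c e)) == 1) = true
      ↔ ¬ e ∈ MINset φ := by
    rw [bAny_iff]
    constructor
    · rintro ⟨j, hj, hpj⟩
      rw [hbit j hj] at hpj
      have hmem : Nat.pair (gIdx c j) (gIdx c e) ∈ eqSet := by
        rw [← indN_eq_one]
        simpa using hpj
      have : stdNumbering (gIdx c j) = stdNumbering (gIdx c e) := by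
        simpa [eqSet, Nat.unpair_pair] using hmem
      rw [std_gIdx hc, std_gIdx hc] at this
      intro hmin
      exact hmin j hj this
    · intro hnm
      simp only [MINset, Set.mem_setOf_eq, not_forall] at hnm
      obtain ⟨j, hj, hne⟩ := hnm
      refine ⟨j, hj, ?_⟩
      rw [hbit j hj]
      have hmem : Nat.pair (gIdx c j) (gIdx c e) ∈ eqSet := by
        simp only [eqSet, Set.mem_setOf_eq, Nat.unpair_pair]
        rw [std_gIdx hc, std_gIdx hc]
        exact not_not.1 hne
      rw [← indN_eq_one] at hmem
      simp [hmem]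
  unfold d1val
  rw [Nat.unpair_pair]
  simp only []
  by_cases hm : e ∈ MINset φ
  · have : bAny e (fun j => Meyer.bitAt (seg eqSet (d1H c e)) (Nat.pair (gIdx c j) (gIdx c e)) == 1) = false := by
      rw [← Bool.not_eq_true]
      rw [key]
      simp [hm]
    rw [this]
    rw [indN_eq]
    simp [hm]
  · have : bAny e (fun j => Meyer.bitAt (seg eqSet (d1H c e)) (Nat.pair (gIdx c j) (gIdx c e)) == 1) = true := key.2 hm
    rw [this]
    rw [indN_eq]
    simp [hm]

end Meyer4


namespace Meyer5
open Meyer Meyer2 Meyer3 Meyer4 Encodable Nat.Partrec.Code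
open Nat.Partrec (Code)

/-- halting-type set -/
def Kp : Set ℕ := {m | (stdNumbering m.unpair.1 m.unpair.2).Dom}

def hw (x s : ℕ) : Bool := (evaln s (Denumerable.ofNat Code x.unpair.1) x.unpair.2).isSome

def haltAt (x m : ℕ) : Bool := hw x (m+1) && !hw x m

lemma hw_zero (x : ℕ) : hw x 0 = false := by
  unfold hw
  by_contra h
  rw [Bool.not_eq_false, Option.isSome_iff_exists] at h
  obtain ⟨v, hv⟩ := h
  have := evaln_bound hv
  omega

lemma hw_mono {x s s' : ℕ} (h : s ≤ s') (hs : hw x s = true) : hw x s' = true := by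
  unfold hw at *
  rw [Option.isSome_iff_exists] at hs ⊢
  obtain ⟨v, hv⟩ := hs
  exact ⟨v, evaln_mono h hv⟩

lemma Kp_iff {x : ℕ} : x ∈ Kp ↔ ∃ s, hw x s = true := by
  unfold Kp hw stdNumbering
  rw [Set.mem_setOf_eq, Part.dom_iff_mem]
  constructor
  · rintro ⟨v, hv⟩
    obtain ⟨k, hk⟩ := evaln_complete.1 hv
    exact ⟨k, Option.isSome_iff_exists.2 ⟨v, hk⟩⟩
  · rintro ⟨s, hs⟩
    obtain ⟨v, hv⟩ := Option.isSome_iff_exists.1 hs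
    exact ⟨v, evaln_complete.2 ⟨s, hv⟩⟩

lemma hw_mem {x s : ℕ} (h : hw x s = true) : x ∈ Kp := Kp_iff.2 ⟨s, h⟩

lemma haltAt_exists {x : ℕ} (h : x ∈ Kp) : ∃ m, haltAt x m = true := by
  obtain ⟨s, hs⟩ := Kp_iff.1 h
  have hex : ∃ s, hw x s = true := ⟨s, hs⟩
  classical
  have hfind := Nat.find_spec hex
  have hne : Nat.find hex ≠ 0 := by
    intro h0
    rw [h0, hw_zero] at hfind
    exact Bool.false_ne_true hfind
  obtain ⟨m, hm⟩ := Nat.exists_eq_succ_of_ne_zero hne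
  refine ⟨m, ?_⟩
  unfold haltAt
  have h1 : hw x (m+1) = true := by
    rw [Nat.succ_eq_add_one] at hm
    rw [← hm]
    exact hfind
  have hlt : m < Nat.find hex := by omega
  have h2 : hw x m = false := by
    have := Nat.find_min hex hlt
    simpa using this
  rw [h1, h2]
  rfl

lemma haltAt_not {x m : ℕ} (h : x ∉ Kp) : haltAt x m = false := by
  unfold haltAt
  by_contra hcon
  rw [Bool.not_eq_false, Bool.and_eq_true] at hcon
  exact h (hw_mem hcon.1)

/-- the singleton-marker family -/
def psiA (x m : ℕ) : Part ℕ := Part.ofOption (bif haltAt x m then some (x+1) else none)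

lemma psiA_none {x m : ℕ} (h : haltAt x m = false) : psiA x m = Part.none := by
  simp [psiA, h]

lemma psiA_some {x m : ℕ} (h : haltAt x m = true) : psiA x m = Part.some (x+1) := by
  simp [psiA, h]

lemma psiA_bot {x : ℕ} (h : x ∉ Kp) : psiA x = fun _ => Part.none := by
  funext m
  exact psiA_none (haltAt_not h)

lemma primrec_hw : Primrec₂ hw := by
  unfold hw
  have h1 : Primrec (fun p : ℕ × ℕ => (((p.2 : ℕ), Denumerable.ofNat Code p.1.unpair.1), p.1.unpair.2)) := by
    exact (Primrec.pair
      (Primrec.pair Primrec.snd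
        ((Primrec.ofNat Code).comp ((Primrec.fst.comp Primrec.unpair).comp Primrec.fst)))
      ((Primrec.snd.comp Primrec.unpair).comp Primrec.fst))
  exact (Primrec.option_isSome.comp (primrec_evaln.comp h1)).to₂

lemma primrec_haltAt : Primrec₂ haltAt := by
  unfold haltAt
  exact (Primrec.and.comp
    (primrec_hw.comp Primrec.fst (Primrec.succ.comp Primrec.snd))
    (Primrec.not.comp (primrec_hw.comp Primrec.fst Primrec.snd))).to₂

lemma numbering_psiA : Numbering' psiA := by
  unfold Numbering'
  have hcomp : Computable (fun p : ℕ × ℕ => bif haltAt p.1 p.2 then some (p.1+1) else (none : Option ℕ)) := by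
    exact Primrec.to_comp (Primrec.cond (primrec_haltAt.comp Primrec.fst Primrec.snd)
      (Primrec.option_some.comp (Primrec.succ.comp Primrec.fst)) (Primrec.const none))
  exact Computable.ofOption hcomp

/-- minimal index basics -/
lemma sInf_spec {φ : ℕ → ℕ →. ℕ} {F : ℕ → Part ℕ} {b : ℕ} (hex : ∃ j, j ≤ b ∧ φ j = F) :
    φ (sInf {j | φ j = F}) = F ∧ sInf {j | φ j = F} ≤ b ∧ sInf {j | φ j = F} ∈ MINset φ := by
  obtain ⟨j0, hj0b, hj0⟩ := hex
  have hne : {j | φ j = F}.Nonempty := ⟨j0, hj0⟩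
  have hmem : φ (sInf {j | φ j = F}) = F := Nat.sInf_mem hne
  refine ⟨hmem, le_trans (Nat.sInf_le hj0) hj0b, ?_⟩
  intro i hi hieq
  have : sInf {j | φ j = F} ≤ i := Nat.sInf_le (by rw [Set.mem_setOf_eq, hieq, hmem])
  omega

def lenOf (σ : ℕ) : ℕ := ((decode (α := List ℕ) σ).getD []).length

lemma lenOf_seg (A : Set ℕ) (n : ℕ) : lenOf (seg A n) = n := by
  simp [lenOf, seg, segL, encodek]

lemma primrec_lenOf : Primrec lenOf :=
  Primrec.list_length.comp (Primrec.option_getD.comp Primrec.decode (Primrec.const []))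

def elimA (c : Code) (x s j : ℕ) : Bool :=
  bAny s (fun m => (evaln s c (Nat.pair j m)).isSome &&
    !(((evaln s c (Nat.pair j m)).getD 0 == x+1) && haltAt x m))

def pA (c : Code) (n0 : ℕ) (a s : ℕ) : Bool :=
  hw a.unpair.1 s ||
  !(bAny (lenOf a.unpair.2) (fun j =>
     (Meyer.bitAt a.unpair.2 j == 1) && !(j == n0) && !(elimA c a.unpair.1 s j)))

def wAns (a s : ℕ) : ℕ := bif hw a.unpair.1 s then 1 else 0

def WA (c : Code) (n0 : ℕ) : ℕ →. ℕ :=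
  fun a => (Nat.rfind (fun s => Part.some (pA c n0 a s))).bind (fun s => Part.some (wAns a s))

lemma primrec_elimA (c : Code) : Primrec (fun t : (ℕ × ℕ) × ℕ => elimA c t.1.1 t.1.2 t.2) := by
  -- t = ((x, s), j)
  unfold elimA
  have hev : Primrec₂ (fun (t : (ℕ × ℕ) × ℕ) (m : ℕ) => evaln t.1.2 c (Nat.pair t.2 m)) := by
    have h1 : Primrec (fun p : ((ℕ × ℕ) × ℕ) × ℕ => ((p.1.1.2, c), Nat.pair p.1.2 p.2)) :=
      Primrec.pair (Primrec.pair ((Primrec.snd.comp Primrec.fst).comp Primrec.fst) (Primrec.const c))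
        (Primrec₂.natPair.comp (Primrec.snd.comp Primrec.fst) Primrec.snd)
    exact (primrec_evaln.comp h1).to₂
  have hx : Primrec (fun t : (ℕ × ℕ) × ℕ => t.1.1) := Primrec.fst.comp Primrec.fst
  have hbody : Primrec₂ (fun (t : (ℕ × ℕ) × ℕ) (m : ℕ) =>
      (evaln t.1.2 c (Nat.pair t.2 m)).isSome &&
      !(((evaln t.1.2 c (Nat.pair t.2 m)).getD 0 == t.1.1+1) && haltAt t.1.1 m)) := by
    exact (Primrec.and.comp
      (Primrec.option_isSome.comp hev)
      (Primrec.not.comp (Primrec.and.comp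
        (Primrec.beq.comp (Primrec.option_getD.comp hev (Primrec.const 0))
          (Primrec.succ.comp (hx.comp Primrec.fst)))
        (primrec_haltAt.comp (hx.comp Primrec.fst) Primrec.snd)))).to₂
  exact ((primrec_bAny hbody).comp Primrec.id (Primrec.snd.comp Primrec.fst))

lemma computable_WA (c : Code) (n0 : ℕ) : Nat.Partrec (WA c n0) := by
  rw [← Partrec.nat_iff]
  unfold WA
  have hpA : Primrec₂ (pA c n0) := by
    unfold pA
    have hx : Primrec (fun a : ℕ => a.unpair.1) := Primrec.fst.comp Primrec.unpair
    have hσ : Primrec (fun a : ℕ => a.unpair.2) := Primrec.snd.comp Primrec.unpair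
    have hcand : Primrec₂ (fun (q : ℕ × ℕ) (j : ℕ) =>
        (Meyer.bitAt q.1.unpair.2 j == 1) && !(j == n0) && !(elimA c q.1.unpair.1 q.2 j)) := by
      exact (Primrec.and.comp
        (Primrec.and.comp
          (Primrec.beq.comp (primrec_bitAt.comp (hσ.comp Primrec.fst |>.comp Primrec.fst) Primrec.snd) (Primrec.const 1))
          (Primrec.not.comp (Primrec.beq.comp Primrec.snd (Primrec.const n0))))
        (Primrec.not.comp ((primrec_elimA c).comp
          (Primrec.pair
            (Primrec.pair ((hx.comp Primrec.fst).comp Primrec.fst) (Primrec.snd.comp Primrec.fst))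
            Primrec.snd)))).to₂
    have hb := (primrec_bAny hcand).comp Primrec.id
        ((primrec_lenOf.comp hσ).comp Primrec.fst)
    exact (Primrec.or.comp
      (primrec_hw.comp (hx.comp Primrec.fst) Primrec.snd)
      (Primrec.not.comp hb)).to₂
  have h1 : Partrec (fun a : ℕ => Nat.rfind (fun s => Part.some (pA c n0 a s))) :=
    Partrec.rfind (Computable₂.partrec₂ (Primrec₂.to_comp hpA))
  have h2 : Computable₂ (fun (a : ℕ) (s : ℕ) => wAns a s) := by
    unfold wAns
    exact Primrec₂.to_comp ((Primrec.cond
      (primrec_hw.comp ((Primrec.fst.comp Primrec.unpair).comp Primrec.fst) Primrec.snd)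
      (Primrec.const 1) (Primrec.const 0)).to₂)
  exact h1.bind (Computable₂.partrec₂ h2)

end Meyer5


namespace Meyer6
open Meyer Meyer2 Meyer3 Meyer4 Meyer5 Encodable Nat.Partrec.Code
open Nat.Partrec (Code)

lemma bAny_eq_false {n : ℕ} {p : ℕ → Bool} : bAny n p = false ↔ ∀ k, k < n → p k = false := by
  rw [← Bool.not_eq_true, bAny_iff]
  push_neg
  constructor
  · intro h k hk
    by_contra hc
    exact (h k hk) (by simpa using hc)
  · intro h k hk
    rw [h k hk]
    simp

lemma indN_one_of {A : Set ℕ} {k : ℕ} (h : k ∈ A) : indN A k = 1 := indN_eq_one.2 h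

lemma indN_zero_of {A : Set ℕ} {k : ℕ} (h : k ∉ A) : indN A k = 0 := by
  classical
  rw [indN_eq]
  simp [h]

theorem stageA {φ : ℕ → ℕ →. ℕ} (hφ : Numbering' φ) (hcb : ComputablyBounded φ) :
    RecursiveIn' (chi (MINset φ)) (chi Kp) := by
  classical
  obtain ⟨c, hc⟩ := numbering_code hφ
  have hev : ∀ j m, c.eval (Nat.pair j m) = φ j m := by
    intro j m
    rw [hc]
    simp
  obtain ⟨f4, hf4c, hf4⟩ := hcb psiA numbering_psiA
  have hnone : Numbering' (fun _ _ => (Part.none : Part ℕ)) := by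
    unfold Numbering'
    exact Partrec.none
  obtain ⟨fz, hfzc, hfz⟩ := hcb _ hnone
  set n0 : ℕ := sInf {j | φ j = fun _ => Part.none} with hn0def
  have hZne : {j | φ j = fun _ => (Part.none : Part ℕ)}.Nonempty := by
    obtain ⟨j, _, hj2⟩ := hfz 0
    exact ⟨j, hj2⟩
  have hn0 : φ n0 = fun _ => Part.none := Nat.sInf_mem hZne
  have hF : RecursiveIn' (chi (MINset φ))
      (fun x => WA c n0 (Nat.pair x (seg (MINset φ) (f4 x + 1)))) :=
    recIn_segQuery (seg_recIn _) (recIn_of_partrec (computable_WA c n0))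
      (Computable.succ.comp hf4c)
  refine recIn_of_eq hF ?_
  intro x
  set σ : ℕ := seg (MINset φ) (f4 x + 1) with hσdef
  have hσbit : ∀ j, j ≤ f4 x → Meyer.bitAt σ j = indN (MINset φ) j := by
    intro j hj
    exact bit_seg (by omega)
  have hpA : ∀ s, pA c n0 (Nat.pair x σ) s =
      (hw x s || !(bAny (f4 x + 1) (fun j =>
        (Meyer.bitAt σ j == 1) && !(j == n0) && !(elimA c x s j)))) := by
    intro s
    unfold pA
    rw [Nat.unpair_pair]
    simp only []
    rw [hσdef, lenOf_seg]
  -- soundness of elimination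
  have hElimSound : ∀ s j, φ j = psiA x → elimA c x s j = false := by
    intro s j hj
    by_contra hcon
    rw [Bool.not_eq_false] at hcon
    unfold elimA at hcon
    obtain ⟨m, _, hconj⟩ := bAny_iff.1 hcon
    rw [Bool.and_eq_true] at hconj
    obtain ⟨hsome, hnot⟩ := hconj
    obtain ⟨v, hv⟩ := Option.isSome_iff_exists.1 hsome
    have hvmem : v ∈ φ j m := by
      rw [← hev]
      exact evaln_sound hv
    rw [hj] at hvmem
    by_cases hh : haltAt x m = true
    · rw [psiA_some hh] at hvmem
      have hveq : v = x + 1 := Part.mem_some_iff.1 hvmem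
      rw [hv] at hnot
      simp [hveq, hh] at hnot
    · rw [psiA_none (by simpa using hh)] at hvmem
      exact Part.notMem_none v hvmem
  -- completeness of elimination (when x ∉ Kp)
  have hElimCompl : x ∉ Kp → ∀ j, φ j ≠ (fun _ => Part.none) →
      ∃ s0, ∀ s, s0 ≤ s → elimA c x s j = true := by
    intro hx j hj
    have : ∃ m, φ j m ≠ Part.none := by
      by_contra hcc
      push_neg at hcc
      exact hj (funext hcc)
    obtain ⟨m, hm⟩ := this
    obtain ⟨v, hv⟩ := Part.ne_none_iff.1 hm
    have hvm : v ∈ c.eval (Nat.pair j m) := by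
      rw [hev]
      rw [hv]
      exact Part.mem_some v
    obtain ⟨k, hk⟩ := evaln_complete.1 hvm
    refine ⟨max k (m+1), fun s hs => ?_⟩
    unfold elimA
    rw [bAny_iff]
    refine ⟨m, by omega, ?_⟩
    have hkv : evaln s c (Nat.pair j m) = some v := evaln_mono (le_trans (le_max_left _ _) hs) hk
    rw [hkv]
    simp [haltAt_not hx]
  -- candidates that must be eliminated are not the empty function
  have hCand : ∀ j, j ∈ MINset φ → j ≠ n0 → φ j ≠ (fun _ => Part.none) := by
    intro j hjmin hjn0 hjeq
    have hle : n0 ≤ j := Nat.sInf_le (by rw [Set.mem_setOf_eq, hjeq])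
    have hlt : n0 < j := by omega
    exact (hjmin n0 hlt) (by rw [hn0, hjeq])
  set p : ℕ →. Bool := fun s => Part.some (pA c n0 (Nat.pair x σ) s) with hpdef
  have hdomp : ∀ m : ℕ, (p m).Dom := fun m => trivial
  -- domain of the search
  have hdom : ∃ s, pA c n0 (Nat.pair x σ) s = true := by
    by_cases hx : x ∈ Kp
    · obtain ⟨s, hs⟩ := Kp_iff.1 hx
      exact ⟨s, by rw [hpA s, hs]; rfl⟩
    · have H : ∀ j, ∃ s0, (j ∈ MINset φ ∧ j ≠ n0) → ∀ s, s0 ≤ s → elimA c x s j = true := by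
        intro j
        by_cases hj : j ∈ MINset φ ∧ j ≠ n0
        · obtain ⟨s0, hs0⟩ := hElimCompl hx j (hCand j hj.1 hj.2)
          exact ⟨s0, fun _ => hs0⟩
        · exact ⟨0, fun hcon => absurd hcon hj⟩
      choose u hu using H
      set S := bMaxF (f4 x + 1) u with hSdef
      refine ⟨S, ?_⟩
      rw [hpA S]
      have : bAny (f4 x + 1) (fun j =>
          (Meyer.bitAt σ j == 1) && !(j == n0) && !(elimA c x S j)) = false := by
        rw [bAny_eq_false]
        intro j hj
        by_contra hcon
        rw [Bool.not_eq_false, Bool.and_eq_true, Bool.and_eq_true] at hcon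
        obtain ⟨⟨hbit, hne⟩, helim⟩ := hcon
        have hjmin : j ∈ MINset φ := by
          rw [hσbit j (by omega)] at hbit
          exact indN_eq_one.1 (by simpa using hbit)
        have hjn0 : j ≠ n0 := by simpa using hne
        have := hu j ⟨hjmin, hjn0⟩ S (bMaxF_le (p := u) hj)
        rw [this] at helim
        simp at helim
      rw [this]
      simp
  obtain ⟨sw, hsw⟩ := hdom
  have hrdom : (Nat.rfind p).Dom := by
    rw [Nat.rfind_dom]
    exact ⟨sw, by rw [hpdef]; exact Part.mem_some_iff.2 (by rw [hsw]), fun {m} _ => trivial⟩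
  set s0 := (Nat.rfind p).get hrdom with hs0def
  have hs0mem : s0 ∈ Nat.rfind p := Part.get_mem hrdom
  have hps0 : pA c n0 (Nat.pair x σ) s0 = true := by
    have := Nat.rfind_spec hs0mem
    rw [hpdef] at this
    exact Part.mem_some_iff.1 this |>.symm
  -- final value
  show WA c n0 (Nat.pair x σ) = chi Kp x
  rw [chi_eq]
  rw [Part.eq_some_iff]
  unfold WA
  rw [Part.mem_bind_iff]
  refine ⟨s0, hs0mem, ?_⟩
  rw [Part.mem_some_iff]
  unfold wAns
  rw [Nat.unpair_pair]
  simp only []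
  by_cases hws : hw x s0 = true
  · rw [hws]
    have : x ∈ Kp := hw_mem hws
    rw [indN_one_of this]
    rfl
  · rw [Bool.not_eq_true] at hws
    rw [hws]
    have hxnot : x ∉ Kp := by
      intro hx
      -- the minimal index of psiA x survives: contradiction
      obtain ⟨j4, hj4le, hj4⟩ := hf4 x
      have hspec := sInf_spec (φ := φ) (F := psiA x) ⟨j4, hj4le, hj4⟩
      set μ := sInf {j | φ j = psiA x} with hμdef
      obtain ⟨hμeq, hμle, hμmin⟩ := hspec
      have hμn0 : μ ≠ n0 := by
        intro heq
        obtain ⟨m, hm⟩ := haltAt_exists hx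
        have h1 : φ μ m = Part.some (x+1) := by rw [hμeq, psiA_some hm]
        have h2 : φ μ m = Part.none := by rw [heq, hn0]
        rw [h1] at h2
        exact Part.some_ne_none _ h2
      rw [hpA s0, hws] at hps0
      simp only [Bool.false_or] at hps0
      rw [Bool.not_eq_true', bAny_eq_false] at hps0
      have := hps0 μ (by omega)
      rw [hσbit μ hμle, indN_one_of hμmin] at this
      have helim : elimA c x s0 μ = true := by
        by_contra hcc
        rw [Bool.not_eq_true] at hcc
        rw [hcc] at this
        simp [hμn0] at this
      rw [hElimSound s0 μ hμeq] at helim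
      exact Bool.false_ne_true helim
    rw [indN_zero_of hxnot]
    rfl

end Meyer6


namespace Meyer7
open Meyer Meyer2 Meyer3 Meyer4 Meyer5 Meyer6 Encodable Nat.Partrec.Code
open Nat.Partrec (Code)

-- elimination data packed as t = pair (pair κ s) (pair dd j)
def tκ (t : ℕ) : ℕ := t.unpair.1.unpair.1
def ts (t : ℕ) : ℕ := t.unpair.1.unpair.2
def tdd (t : ℕ) : ℕ := t.unpair.2.unpair.1
def tj (t : ℕ) : ℕ := t.unpair.2.unpair.2

/-- discovers a disagreement between `φ_j` and `std_dd` at input `n`, stage `s`,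
with `κ` a table of answers for `Kp` -/
def disB (c : Code) (e1 : ℕ) (t n : ℕ) : Bool :=
  (Meyer.bitAt (tκ t) (Nat.pair e1 (Nat.pair (tj t) n)) != Meyer.bitAt (tκ t) (Nat.pair (tdd t) n)) ||
  ((evaln (ts t) c (Nat.pair (tj t) n)).isSome &&
   (evaln (ts t) (Denumerable.ofNat Code (tdd t)) n).isSome &&
    !((evaln (ts t) c (Nat.pair (tj t) n)).getD 0 ==
      (evaln (ts t) (Denumerable.ofNat Code (tdd t)) n).getD 0))

def elimB (c : Code) (e1 : ℕ) (t : ℕ) : Bool := bAny (ts t + 1) (disB c e1 t)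

-- survivor data packed as u = pair (pair κ s) (pair σ dd)
def uκ (u : ℕ) : ℕ := u.unpair.1.unpair.1
def us (u : ℕ) : ℕ := u.unpair.1.unpair.2
def uσ (u : ℕ) : ℕ := u.unpair.2.unpair.1
def udd (u : ℕ) : ℕ := u.unpair.2.unpair.2

def survP (c : Code) (e1 : ℕ) (u j : ℕ) : Bool :=
  (Meyer.bitAt (uσ u) j == 1) &&
  !(elimB c e1 (Nat.pair (Nat.pair (uκ u) (us u)) (Nat.pair (udd u) j)))

-- query input q = pair m κ, m = pair a s, a = pair n σ, n = pair w (pair bd be), w = pair d e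
def qκ (q : ℕ) : ℕ := q.unpair.2
def qm (q : ℕ) : ℕ := q.unpair.1
def qa (q : ℕ) : ℕ := (qm q).unpair.1
def qs (q : ℕ) : ℕ := (qm q).unpair.2
def qn (q : ℕ) : ℕ := (qa q).unpair.1
def qσ (q : ℕ) : ℕ := (qa q).unpair.2
def qw (q : ℕ) : ℕ := (qn q).unpair.1
def qd (q : ℕ) : ℕ := (qw q).unpair.1
def qe (q : ℕ) : ℕ := (qw q).unpair.2
def qbd (q : ℕ) : ℕ := (qn q).unpair.2.unpair.1
def qbe (q : ℕ) : ℕ := (qn q).unpair.2.unpair.2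

def uPackD (q : ℕ) : ℕ := Nat.pair (Nat.pair (qκ q) (qs q)) (Nat.pair (qσ q) (qd q))
def uPackE (q : ℕ) : ℕ := Nat.pair (Nat.pair (qκ q) (qs q)) (Nat.pair (qσ q) (qe q))

def pBval (c : Code) (e1 : ℕ) (q : ℕ) : ℕ :=
  bif (bCnt (qbd q + 1) (survP c e1 (uPackD q)) == 1) &&
      (bCnt (qbe q + 1) (survP c e1 (uPackE q)) == 1) then 0 else 1

def postval (c : Code) (e1 : ℕ) (q : ℕ) : ℕ :=
  bif bPick (qbd q + 1) (survP c e1 (uPackD q)) == bPick (qbe q + 1) (survP c e1 (uPackE q))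
  then 1 else 0

/-- bound on the positions of `Kp`-queries; input `m = pair a s` -/
def QB (e1 : ℕ) (m : ℕ) : ℕ :=
  (max (bMaxF (max (m.unpair.1.unpair.1.unpair.2.unpair.1) (m.unpair.1.unpair.1.unpair.2.unpair.2) + 1)
          (fun j => bMaxF (m.unpair.2 + 1) (fun t => Nat.pair e1 (Nat.pair j t))))
       (bMaxF (m.unpair.2 + 1) (fun t =>
          max (Nat.pair (m.unpair.1.unpair.1.unpair.1.unpair.1) t)
              (Nat.pair (m.unpair.1.unpair.1.unpair.1.unpair.2) t)))) + 1

/-- bound on the positions of `MIN`-queries; input `n = pair w (pair bd be)` -/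
def HB (n : ℕ) : ℕ := max n.unpair.2.unpair.1 n.unpair.2.unpair.2 + 1

section Prim
open Primrec

private lemma pu1 : Primrec (fun m : ℕ => m.unpair.1) := fst.comp Primrec.unpair
private lemma pu2 : Primrec (fun m : ℕ => m.unpair.2) := snd.comp Primrec.unpair

lemma primrec_disB (c : Code) (e1 : ℕ) : Primrec₂ (disB c e1) := by
  unfold disB
  have htκ : Primrec (fun p : ℕ × ℕ => tκ p.1) := (pu1.comp pu1).comp fst
  have hts : Primrec (fun p : ℕ × ℕ => ts p.1) := (pu2.comp pu1).comp fst
  have htdd : Primrec (fun p : ℕ × ℕ => tdd p.1) := (pu1.comp pu2).comp fst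
  have htj : Primrec (fun p : ℕ × ℕ => tj p.1) := (pu2.comp pu2).comp fst
  have hev1 : Primrec (fun p : ℕ × ℕ => evaln (ts p.1) c (Nat.pair (tj p.1) p.2)) := by
    have hpk : Primrec (fun p : ℕ × ℕ => ((ts p.1, c), Nat.pair (tj p.1) p.2)) :=
      Primrec.pair (Primrec.pair hts (const c)) (Primrec₂.natPair.comp htj snd)
    exact primrec_evaln.comp hpk
  have hev2 : Primrec (fun p : ℕ × ℕ => evaln (ts p.1) (Denumerable.ofNat Code (tdd p.1)) p.2) := by
    have hpk : Primrec (fun p : ℕ × ℕ => ((ts p.1, Denumerable.ofNat Code (tdd p.1)), p.2)) :=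
      Primrec.pair (Primrec.pair hts ((Primrec.ofNat Code).comp htdd)) snd
    exact primrec_evaln.comp hpk
  have hbit1 : Primrec (fun p : ℕ × ℕ => Meyer.bitAt (tκ p.1) (Nat.pair e1 (Nat.pair (tj p.1) p.2))) :=
    primrec_bitAt.comp htκ (Primrec₂.natPair.comp (const e1) (Primrec₂.natPair.comp htj snd))
  have hbit2 : Primrec (fun p : ℕ × ℕ => Meyer.bitAt (tκ p.1) (Nat.pair (tdd p.1) p.2)) :=
    primrec_bitAt.comp htκ (Primrec₂.natPair.comp htdd snd)
  exact (Primrec.or.comp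
    (Primrec.not.comp (Primrec.beq.comp hbit1 hbit2))
    (Primrec.and.comp
      (Primrec.and.comp (Primrec.option_isSome.comp hev1) (Primrec.option_isSome.comp hev2))
      (Primrec.not.comp (Primrec.beq.comp
        (Primrec.option_getD.comp hev1 (const 0))
        (Primrec.option_getD.comp hev2 (const 0)))))).to₂

lemma primrec_elimB (c : Code) (e1 : ℕ) : Primrec (elimB c e1) := by
  unfold elimB
  exact (primrec_bAny (primrec_disB c e1)).comp Primrec.id (succ.comp (pu2.comp pu1))

lemma primrec_survP (c : Code) (e1 : ℕ) : Primrec₂ (survP c e1) := by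
  unfold survP
  have huκ : Primrec (fun p : ℕ × ℕ => uκ p.1) := (pu1.comp pu1).comp fst
  have hus : Primrec (fun p : ℕ × ℕ => us p.1) := (pu2.comp pu1).comp fst
  have huσ : Primrec (fun p : ℕ × ℕ => uσ p.1) := (pu1.comp pu2).comp fst
  have hudd : Primrec (fun p : ℕ × ℕ => udd p.1) := (pu2.comp pu2).comp fst
  exact (Primrec.and.comp
    (Primrec.beq.comp (primrec_bitAt.comp huσ snd) (const 1))
    (Primrec.not.comp ((primrec_elimB c e1).comp
      (Primrec₂.natPair.comp (Primrec₂.natPair.comp huκ hus)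
        (Primrec₂.natPair.comp hudd snd))))).to₂

lemma primrec_pBval (c : Code) (e1 : ℕ) : Primrec (pBval c e1) := by
  unfold pBval
  have hqκ : Primrec qκ := pu2
  have hqs : Primrec qs := pu2.comp pu1
  have hqσ : Primrec qσ := pu2.comp (pu1.comp pu1)
  have hqn : Primrec qn := pu1.comp (pu1.comp pu1)
  have hqw : Primrec qw := pu1.comp hqn
  have hqd : Primrec qd := pu1.comp hqw
  have hqe : Primrec qe := pu2.comp hqw
  have hqbd : Primrec qbd := pu1.comp (pu2.comp hqn)
  have hqbe : Primrec qbe := pu2.comp (pu2.comp hqn)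
  have hD : Primrec uPackD :=
    Primrec₂.natPair.comp (Primrec₂.natPair.comp hqκ hqs) (Primrec₂.natPair.comp hqσ hqd)
  have hE : Primrec uPackE :=
    Primrec₂.natPair.comp (Primrec₂.natPair.comp hqκ hqs) (Primrec₂.natPair.comp hqσ hqe)
  have hcnt : Primrec₂ (fun (u : ℕ) (b : ℕ) => bCnt b (survP c e1 u)) :=
    primrec_bCnt (primrec_survP c e1)
  exact Primrec.cond
    (Primrec.and.comp
      (Primrec.beq.comp (hcnt.comp hD (succ.comp hqbd)) (const 1))
      (Primrec.beq.comp (hcnt.comp hE (succ.comp hqbe)) (const 1)))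
    (const 0) (const 1)

lemma primrec_postval (c : Code) (e1 : ℕ) : Primrec (postval c e1) := by
  unfold postval
  have hqκ : Primrec qκ := pu2
  have hqs : Primrec qs := pu2.comp pu1
  have hqσ : Primrec qσ := pu2.comp (pu1.comp pu1)
  have hqn : Primrec qn := pu1.comp (pu1.comp pu1)
  have hqw : Primrec qw := pu1.comp hqn
  have hqd : Primrec qd := pu1.comp hqw
  have hqe : Primrec qe := pu2.comp hqw
  have hqbd : Primrec qbd := pu1.comp (pu2.comp hqn)
  have hqbe : Primrec qbe := pu2.comp (pu2.comp hqn)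
  have hD : Primrec uPackD :=
    Primrec₂.natPair.comp (Primrec₂.natPair.comp hqκ hqs) (Primrec₂.natPair.comp hqσ hqd)
  have hE : Primrec uPackE :=
    Primrec₂.natPair.comp (Primrec₂.natPair.comp hqκ hqs) (Primrec₂.natPair.comp hqσ hqe)
  have hpick : Primrec₂ (fun (u : ℕ) (b : ℕ) => bPick b (survP c e1 u)) :=
    primrec_bPick (primrec_survP c e1)
  exact Primrec.cond
    (Primrec.beq.comp (hpick.comp hD (succ.comp hqbd)) (hpick.comp hE (succ.comp hqbe)))
    (const 1) (const 0)

lemma primrec_QB (e1 : ℕ) : Primrec (QB e1) := by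
  unfold QB
  have hbd : Primrec (fun m : ℕ => m.unpair.1.unpair.1.unpair.2.unpair.1) :=
    pu1.comp (pu2.comp (pu1.comp pu1))
  have hbe : Primrec (fun m : ℕ => m.unpair.1.unpair.1.unpair.2.unpair.2) :=
    pu2.comp (pu2.comp (pu1.comp pu1))
  have hd : Primrec (fun m : ℕ => m.unpair.1.unpair.1.unpair.1.unpair.1) :=
    pu1.comp (pu1.comp (pu1.comp pu1))
  have he : Primrec (fun m : ℕ => m.unpair.1.unpair.1.unpair.1.unpair.2) :=
    pu2.comp (pu1.comp (pu1.comp pu1))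
  have hinner : Primrec₂ (fun (m : ℕ) (j : ℕ) =>
      bMaxF (m.unpair.2 + 1) (fun t => Nat.pair e1 (Nat.pair j t))) := by
    have h0 : Primrec₂ (fun (p : ℕ × ℕ) (t : ℕ) => Nat.pair e1 (Nat.pair p.2 t)) :=
      (Primrec₂.natPair.comp (Primrec.const e1)
        (Primrec₂.natPair.comp (Primrec.snd.comp Primrec.fst) Primrec.snd)).to₂
    exact ((primrec_bMaxF h0).comp Primrec.id
      (Primrec.succ.comp (pu2.comp Primrec.fst))).to₂
  have houter : Primrec (fun m : ℕ =>
      bMaxF (max (m.unpair.1.unpair.1.unpair.2.unpair.1) (m.unpair.1.unpair.1.unpair.2.unpair.2) + 1)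
        (fun j => bMaxF (m.unpair.2 + 1) (fun t => Nat.pair e1 (Nat.pair j t)))) :=
    (primrec_bMaxF hinner).comp Primrec.id
      (Primrec.succ.comp (Primrec.nat_max.comp hbd hbe))
  have hsecond : Primrec (fun m : ℕ =>
      bMaxF (m.unpair.2 + 1) (fun t =>
        max (Nat.pair (m.unpair.1.unpair.1.unpair.1.unpair.1) t)
            (Nat.pair (m.unpair.1.unpair.1.unpair.1.unpair.2) t))) := by
    have hp : Primrec₂ (fun (m : ℕ) (t : ℕ) =>
        max (Nat.pair (m.unpair.1.unpair.1.unpair.1.unpair.1) t)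
            (Nat.pair (m.unpair.1.unpair.1.unpair.1.unpair.2) t)) :=
      (Primrec.nat_max.comp
        (Primrec₂.natPair.comp (hd.comp Primrec.fst) Primrec.snd)
        (Primrec₂.natPair.comp (he.comp Primrec.fst) Primrec.snd)).to₂
    exact (primrec_bMaxF hp).comp Primrec.id (Primrec.succ.comp pu2)
  exact Primrec.succ.comp (Primrec.nat_max.comp houter hsecond)

lemma primrec_HB : Primrec HB := by
  unfold HB
  exact Primrec.succ.comp (Primrec.nat_max.comp (pu1.comp pu2) (pu2.comp pu2))

end Prim

end Meyer7


namespace Meyer8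
open Meyer Meyer2 Meyer3 Meyer4 Meyer5 Meyer6 Meyer7 Encodable Nat.Partrec.Code
open Nat.Partrec (Code)

lemma bCnt_two {n : ℕ} {p : ℕ → Bool} {j k : ℕ} (hj : j < n) (hk : k < n) (hjk : j ≠ k)
    (hpj : p j = true) (hpk : p k = true) : 2 ≤ bCnt n p := by
  induction n with
  | zero => omega
  | succ n ih =>
      rw [bCnt_succ]
      rcases Nat.lt_succ_iff_lt_or_eq.1 hj with hj' | rfl
      · rcases Nat.lt_succ_iff_lt_or_eq.1 hk with hk' | rfl
        · have := ih hj' hk'; omega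
        · rw [hpk]
          simp only [cond_true]
          have := bCnt_pos hj' hpj
          omega
      · have hk' : k < j := by omega
        rw [hpj]
        simp only [cond_true]
        have := bCnt_pos hk' hpk
        omega

lemma bCnt_one_unique {n : ℕ} {p : ℕ → Bool} {k : ℕ} (h1 : bCnt n p = 1) (hk : k < n)
    (hpk : p k = true) : ∀ j, j < n → p j = true → j = k := by
  intro j hj hpj
  by_contra hne
  have := bCnt_two hj hk hne hpj hpk
  omega

theorem dir2 (φ : ℕ → ℕ →. ℕ) (hφ : Numbering' φ) (hcb : ComputablyBounded φ) :
    TuringLE eqSet (MINset φ) := by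
  classical
  obtain ⟨c, hc⟩ := numbering_code hφ
  have hev : ∀ j m, c.eval (Nat.pair j m) = φ j m := by
    intro j m; rw [hc]; simp
  set e1 : ℕ := encode c with he1def
  have hstd_e1 : stdNumbering e1 = c.eval := by
    unfold stdNumbering
    rw [he1def, Denumerable.ofNat_encode]
  have hstdnum : Numbering' stdNumbering := by
    unfold Numbering'
    exact eval_part.comp ((Computable.ofNat Code).comp Computable.fst) Computable.snd
  obtain ⟨fs, hfsc, hfs⟩ := hcb stdNumbering hstdnum
  have hKp : RecursiveIn' (chi (MINset φ)) (chi Kp) := stageA hφ hcb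
  -- build the oracle machine
  have hinner : RecursiveIn' (chi Kp)
      (fun m => (↑(pBval c e1) : ℕ →. ℕ) (Nat.pair m (seg Kp (QB e1 m)))) :=
    recIn_segQuery (seg_recIn Kp) (recIn_of_computable (primrec_pBval c e1).to_comp)
      (primrec_QB e1).to_comp
  have hpost : RecursiveIn' (chi Kp)
      (fun m => (↑(postval c e1) : ℕ →. ℕ) (Nat.pair m (seg Kp (QB e1 m)))) :=
    recIn_segQuery (seg_recIn Kp) (recIn_of_computable (primrec_postval c e1).to_comp)
      (primrec_QB e1).to_comp
  have hCoreB := RecursiveIn'.comp hpost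
    (RecursiveIn'.pair (recIn_of_computable (Computable.id : Computable (fun k : ℕ => k)))
      (RecursiveIn'.rfind hinner))
  have hOuter := recIn_segQuery (seg_recIn (MINset φ)) (recIn_trans hCoreB hKp)
    (Primrec.to_comp primrec_HB)
  have hpackc : Computable (fun w : ℕ => Nat.pair w (Nat.pair (fs w.unpair.1) (fs w.unpair.2))) := by
    have h1 : Computable (fun w : ℕ => fs w.unpair.1) :=
      hfsc.comp (Computable.fst.comp Computable.unpair)
    have h2 : Computable (fun w : ℕ => fs w.unpair.2) :=
      hfsc.comp (Computable.snd.comp Computable.unpair)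
    exact Primrec₂.natPair.to_comp.comp Computable.id
      (Primrec₂.natPair.to_comp.comp h1 h2)
  have hFinal := RecursiveIn'.comp hOuter (recIn_of_computable hpackc)
  unfold TuringLE
  refine recIn_of_eq hFinal ?_
  intro w
  -- ===================== value-level correctness =====================
  set d : ℕ := w.unpair.1 with hd
  set e : ℕ := w.unpair.2 with he
  set bd : ℕ := fs d with hbd
  set be : ℕ := fs e with hbe
  set B : ℕ := max bd be with hB
  set nn : ℕ := Nat.pair w (Nat.pair bd be) with hnn
  set σ : ℕ := seg (MINset φ) (HB nn) with hσ
  set a : ℕ := Nat.pair nn σ with ha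
  set κs : ℕ → ℕ := fun s => seg Kp (QB e1 (Nat.pair a s)) with hκs
  have hHB : HB nn = B + 1 := by
    simp [HB, hnn, Nat.unpair_pair, hB]
  -- the bound on Kp-queries
  have hQB : ∀ s : ℕ, QB e1 (Nat.pair a s) =
      (max (bMaxF (B+1) (fun j => bMaxF (s+1) (fun t => Nat.pair e1 (Nat.pair j t))))
           (bMaxF (s+1) (fun t => max (Nat.pair d t) (Nat.pair e t)))) + 1 := by
    intro s
    simp [QB, ha, hnn, Nat.unpair_pair, hB, hd, he]
  -- bits of σ
  have hσbit : ∀ j, j ≤ B → Meyer.bitAt σ j = indN (MINset φ) j := by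
    intro j hj
    rw [hσ, hHB]
    exact bit_seg (by omega)
  -- bits of κs
  have hκ1 : ∀ s j n, j ≤ B → n ≤ s →
      Meyer.bitAt (κs s) (Nat.pair e1 (Nat.pair j n)) = indN Kp (Nat.pair e1 (Nat.pair j n)) := by
    intro s j n hjB hns
    rw [hκs]
    apply bit_seg
    rw [hQB s]
    have h1 : Nat.pair e1 (Nat.pair j n) ≤ bMaxF (s+1) (fun t => Nat.pair e1 (Nat.pair j t)) :=
      bMaxF_le (p := fun t => Nat.pair e1 (Nat.pair j t)) (by omega)
    have h2 : bMaxF (s+1) (fun t => Nat.pair e1 (Nat.pair j t)) ≤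
        bMaxF (B+1) (fun j => bMaxF (s+1) (fun t => Nat.pair e1 (Nat.pair j t))) :=
      bMaxF_le (p := fun j => bMaxF (s+1) (fun t => Nat.pair e1 (Nat.pair j t))) (by omega)
    have h3 := le_max_left
      (bMaxF (B+1) (fun j => bMaxF (s+1) (fun t => Nat.pair e1 (Nat.pair j t))))
      (bMaxF (s+1) (fun t => max (Nat.pair d t) (Nat.pair e t)))
    omega
  have hκ2 : ∀ s n dd, (dd = d ∨ dd = e) → n ≤ s →
      Meyer.bitAt (κs s) (Nat.pair dd n) = indN Kp (Nat.pair dd n) := by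
    intro s n dd hdd hns
    rw [hκs]
    apply bit_seg
    rw [hQB s]
    have h1 : max (Nat.pair d n) (Nat.pair e n) ≤
        bMaxF (s+1) (fun t => max (Nat.pair d t) (Nat.pair e t)) :=
      bMaxF_le (p := fun t => max (Nat.pair d t) (Nat.pair e t)) (by omega)
    have h3 := le_max_right
      (bMaxF (B+1) (fun j => bMaxF (s+1) (fun t => Nat.pair e1 (Nat.pair j t))))
      (bMaxF (s+1) (fun t => max (Nat.pair d t) (Nat.pair e t)))
    have h4 : Nat.pair dd n ≤ max (Nat.pair d n) (Nat.pair e n) := by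
      rcases hdd with rfl | rfl
      · exact le_max_left _ _
      · exact le_max_right _ _
    omega
  -- Kp semantics
  have hK1 : ∀ j n, Nat.pair e1 (Nat.pair j n) ∈ Kp ↔ (φ j n).Dom := by
    intro j n
    unfold Kp
    rw [Set.mem_setOf_eq, Nat.unpair_pair]
    simp only [Nat.unpair_pair]
    rw [hstd_e1, hev]
  have hK2 : ∀ dd n, Nat.pair dd n ∈ Kp ↔ (stdNumbering dd n).Dom := by
    intro dd n
    unfold Kp
    rw [Set.mem_setOf_eq, Nat.unpair_pair]
  -- elimination: soundness
  have hElimS : ∀ s dd j, (dd = d ∨ dd = e) → j ≤ B →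
      elimB c e1 (Nat.pair (Nat.pair (κs s) s) (Nat.pair dd j)) = true →
      φ j ≠ stdNumbering dd := by
    intro s dd j hdd hjB helim
    unfold elimB at helim
    have hts : ts (Nat.pair (Nat.pair (κs s) s) (Nat.pair dd j)) = s := by
      simp [ts, Nat.unpair_pair]
    rw [hts] at helim
    obtain ⟨n, hn, hdis⟩ := bAny_iff.1 helim
    unfold disB at hdis
    simp only [tκ, ts, tdd, tj, Nat.unpair_pair] at hdis
    rw [Bool.or_eq_true] at hdis
    intro heqfn
    rcases hdis with hbit | hval
    · -- domain disagreement
      rw [hκ1 s j n hjB (by omega), hκ2 s n dd hdd (by omega)] at hbit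
      have hdomeq : (φ j n).Dom ↔ (stdNumbering dd n).Dom := by
        rw [heqfn]
      have : indN Kp (Nat.pair e1 (Nat.pair j n)) = indN Kp (Nat.pair dd n) := by
        by_cases h1 : (φ j n).Dom
        · rw [indN_one_of ((hK1 j n).2 h1), indN_one_of ((hK2 dd n).2 (hdomeq.1 h1))]
        · rw [indN_zero_of (fun hm => h1 ((hK1 j n).1 hm)),
            indN_zero_of (fun hm => h1 (hdomeq.2 ((hK2 dd n).1 hm)))]
      rw [this] at hbit
      simp at hbit
    · -- value disagreement
      rw [Bool.and_eq_true, Bool.and_eq_true] at hval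
      obtain ⟨⟨hs1, hs2⟩, hneq⟩ := hval
      obtain ⟨v1, hv1⟩ := Option.isSome_iff_exists.1 hs1
      obtain ⟨v2, hv2⟩ := Option.isSome_iff_exists.1 hs2
      have hm1 : v1 ∈ φ j n := by rw [← hev]; exact evaln_sound hv1
      have hm2 : v2 ∈ stdNumbering dd n := evaln_sound hv2
      rw [heqfn] at hm1
      have : v1 = v2 := Part.mem_unique hm1 hm2
      rw [hv1, hv2] at hneq
      simp [this] at hneq
  -- elimination: completeness
  have hElimC : ∀ dd j, (dd = d ∨ dd = e) → j ≤ B → φ j ≠ stdNumbering dd →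
      ∃ s0, ∀ s, s0 ≤ s →
        elimB c e1 (Nat.pair (Nat.pair (κs s) s) (Nat.pair dd j)) = true := by
    intro dd j hdd hjB hne
    have : ∃ n, φ j n ≠ stdNumbering dd n := by
      by_contra hcc
      push_neg at hcc
      exact hne (funext hcc)
    obtain ⟨n, hn⟩ := this
    have key : ∀ s, n ≤ s → ∀ extra : Unit,
        (¬((φ j n).Dom ↔ (stdNumbering dd n).Dom)) →
        disB c e1 (Nat.pair (Nat.pair (κs s) s) (Nat.pair dd j)) n = true := by
      intro s hns _ hdom
      unfold disB
      simp only [tκ, ts, tdd, tj, Nat.unpair_pair]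
      rw [Bool.or_eq_true]
      left
      rw [hκ1 s j n hjB hns, hκ2 s n dd hdd hns]
      rw [bne_iff_ne]
      intro hconeq
      by_cases h1 : (φ j n).Dom
      · have h2 : (stdNumbering dd n).Dom := by
          by_contra h2
          rw [indN_one_of ((hK1 j n).2 h1), indN_zero_of (fun hm => h2 ((hK2 dd n).1 hm))] at hconeq
          omega
        exact hdom ⟨fun _ => h2, fun _ => h1⟩
      · have h2 : ¬(stdNumbering dd n).Dom := by
          by_contra h2
          rw [indN_zero_of (fun hm => h1 ((hK1 j n).1 hm)), indN_one_of ((hK2 dd n).2 h2)] at hconeq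
          omega
        exact hdom ⟨fun h => absurd h h1, fun h => absurd h h2⟩
    by_cases hdom : (φ j n).Dom ↔ (stdNumbering dd n).Dom
    · -- both converge with different values (both diverging is impossible)
      have h1 : (φ j n).Dom := by
        by_contra h1
        have h2 : ¬(stdNumbering dd n).Dom := fun h => h1 (hdom.2 h)
        apply hn
        rw [Part.eq_none_iff'.2 h1, Part.eq_none_iff'.2 h2]
      have h2 : (stdNumbering dd n).Dom := hdom.1 h1
      set v1 := (φ j n).get h1 with hv1def
      set v2 := (stdNumbering dd n).get h2 with hv2def
      have hm1 : v1 ∈ φ j n := Part.get_mem h1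
      have hm2 : v2 ∈ stdNumbering dd n := Part.get_mem h2
      have hv12 : v1 ≠ v2 := by
        intro heq
        apply hn
        rw [Part.eq_some_iff.2 hm1, Part.eq_some_iff.2 hm2, heq]
      have hm1' : v1 ∈ c.eval (Nat.pair j n) := by rw [hev]; exact hm1
      obtain ⟨k1, hk1⟩ := evaln_complete.1 hm1'
      obtain ⟨k2, hk2⟩ := evaln_complete.1 hm2
      refine ⟨max n (max k1 k2), fun s hs => ?_⟩
      unfold elimB
      have hts : ts (Nat.pair (Nat.pair (κs s) s) (Nat.pair dd j)) = s := by
        simp [ts, Nat.unpair_pair]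
      rw [hts, bAny_iff]
      refine ⟨n, by omega, ?_⟩
      unfold disB
      simp only [tκ, ts, tdd, tj, Nat.unpair_pair]
      rw [Bool.or_eq_true]
      right
      have he1' : evaln s c (Nat.pair j n) = some v1 := evaln_mono (by omega) hk1
      have he2' : evaln s (Denumerable.ofNat Code dd) n = some v2 := evaln_mono (by omega) hk2
      rw [he1', he2']
      simp [hv12]
    · refine ⟨n, fun s hs => ?_⟩
      unfold elimB
      have hts : ts (Nat.pair (Nat.pair (κs s) s) (Nat.pair dd j)) = s := by
        simp [ts, Nat.unpair_pair]
      rw [hts, bAny_iff]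
      exact ⟨n, by omega, key s hs () hdom⟩
  -- minimal true indices
  obtain ⟨hMd_eq, hMd_le, hMd_min⟩ := sInf_spec (φ := φ) (F := stdNumbering d) (hfs d)
  obtain ⟨hMe_eq, hMe_le, hMe_min⟩ := sInf_spec (φ := φ) (F := stdNumbering e) (hfs e)
  set Md : ℕ := sInf {j | φ j = stdNumbering d} with hMd
  set Me : ℕ := sInf {j | φ j = stdNumbering e} with hMe
  -- survivor predicate at stage s
  have huD : ∀ s : ℕ, uPackD (Nat.pair (Nat.pair a s) (κs s)) =
      Nat.pair (Nat.pair (κs s) s) (Nat.pair σ d) := by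
    intro s
    simp [uPackD, qκ, qs, qσ, qd, qw, qn, qa, qm, ha, hnn, Nat.unpair_pair, hd]
  have huE : ∀ s : ℕ, uPackE (Nat.pair (Nat.pair a s) (κs s)) =
      Nat.pair (Nat.pair (κs s) s) (Nat.pair σ e) := by
    intro s
    simp [uPackE, qκ, qs, qσ, qe, qw, qn, qa, qm, ha, hnn, Nat.unpair_pair, he]
  have hsurv : ∀ s dd j, survP c e1 (Nat.pair (Nat.pair (κs s) s) (Nat.pair σ dd)) j =
      ((Meyer.bitAt σ j == 1) &&
       !(elimB c e1 (Nat.pair (Nat.pair (κs s) s) (Nat.pair dd j)))) := by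
    intro s dd j
    simp [survP, uκ, us, uσ, udd, Nat.unpair_pair]
  -- the true index survives
  have hMdsurv : ∀ s, survP c e1 (Nat.pair (Nat.pair (κs s) s) (Nat.pair σ d)) Md = true := by
    intro s
    rw [hsurv]
    rw [Bool.and_eq_true]
    constructor
    · rw [hσbit Md (by omega), indN_one_of hMd_min]
      rfl
    · rw [Bool.not_eq_true']
      by_contra hcon
      rw [Bool.not_eq_false] at hcon
      exact (hElimS s d Md (Or.inl rfl) (by omega) hcon) hMd_eq
  have hMesurv : ∀ s, survP c e1 (Nat.pair (Nat.pair (κs s) s) (Nat.pair σ e)) Me = true := by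
    intro s
    rw [hsurv]
    rw [Bool.and_eq_true]
    constructor
    · rw [hσbit Me (by omega), indN_one_of hMe_min]
      rfl
    · rw [Bool.not_eq_true']
      by_contra hcon
      rw [Bool.not_eq_false] at hcon
      exact (hElimS s e Me (Or.inr rfl) (by omega) hcon) hMe_eq
  -- other minimal indices are different functions
  have hOther : ∀ dd (Mdd : ℕ), φ Mdd = stdNumbering dd → Mdd ∈ MINset φ →
      ∀ j, j ∈ MINset φ → j ≠ Mdd → φ j ≠ stdNumbering dd := by
    intro dd Mdd hMddeq hMddmin j hjmin hjne hjeq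
    rcases Nat.lt_or_ge j Mdd with h | h
    · exact (hMddmin j h) (by rw [hjeq, hMddeq])
    · have : Mdd < j := by omega
      exact (hjmin Mdd this) (by rw [hjeq, hMddeq])
  -- eventual stage where counts are exactly 1
  have hStage : ∃ S, ∀ s, S ≤ s →
      (bCnt (bd+1) (survP c e1 (Nat.pair (Nat.pair (κs s) s) (Nat.pair σ d))) = 1 ∧
       bCnt (be+1) (survP c e1 (Nat.pair (Nat.pair (κs s) s) (Nat.pair σ e))) = 1) := by
    have Hd : ∀ j, ∃ s0, (j ≤ bd ∧ j ∈ MINset φ ∧ j ≠ Md) → ∀ s, s0 ≤ s →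
        elimB c e1 (Nat.pair (Nat.pair (κs s) s) (Nat.pair d j)) = true := by
      intro j
      by_cases hj : j ≤ bd ∧ j ∈ MINset φ ∧ j ≠ Md
      · obtain ⟨s0, hs0⟩ := hElimC d j (Or.inl rfl) (by omega)
          (hOther d Md hMd_eq hMd_min j hj.2.1 hj.2.2)
        exact ⟨s0, fun _ => hs0⟩
      · exact ⟨0, fun hcon => absurd hcon hj⟩
    have He : ∀ j, ∃ s0, (j ≤ be ∧ j ∈ MINset φ ∧ j ≠ Me) → ∀ s, s0 ≤ s →
        elimB c e1 (Nat.pair (Nat.pair (κs s) s) (Nat.pair e j)) = true := by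
      intro j
      by_cases hj : j ≤ be ∧ j ∈ MINset φ ∧ j ≠ Me
      · obtain ⟨s0, hs0⟩ := hElimC e j (Or.inr rfl) (by omega)
          (hOther e Me hMe_eq hMe_min j hj.2.1 hj.2.2)
        exact ⟨s0, fun _ => hs0⟩
      · exact ⟨0, fun hcon => absurd hcon hj⟩
    choose ud hud using Hd
    choose ue hue using He
    refine ⟨max (bMaxF (bd+1) ud) (bMaxF (be+1) ue), fun s hs => ?_⟩
    have hyD : ∀ j, j < bd + 1 →
        survP c e1 (Nat.pair (Nat.pair (κs s) s) (Nat.pair σ d)) j = true → j = Md := by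
      intro j hjlt hsp
      rw [hsurv, Bool.and_eq_true] at hsp
      obtain ⟨hbit, hnel⟩ := hsp
      have hjmin : j ∈ MINset φ := by
        rw [hσbit j (by omega)] at hbit
        exact indN_eq_one.1 (by simpa using hbit)
      by_contra hne
      have h1 : ud j ≤ bMaxF (bd+1) ud := bMaxF_le (p := ud) hjlt
      have := hud j ⟨by omega, hjmin, hne⟩ s (by omega)
      rw [this] at hnel
      simp at hnel
    have hyE : ∀ j, j < be + 1 →
        survP c e1 (Nat.pair (Nat.pair (κs s) s) (Nat.pair σ e)) j = true → j = Me := by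
      intro j hjlt hsp
      rw [hsurv, Bool.and_eq_true] at hsp
      obtain ⟨hbit, hnel⟩ := hsp
      have hjmin : j ∈ MINset φ := by
        rw [hσbit j (by omega)] at hbit
        exact indN_eq_one.1 (by simpa using hbit)
      by_contra hne
      have h1 : ue j ≤ bMaxF (be+1) ue := bMaxF_le (p := ue) hjlt
      have := hue j ⟨by omega, hjmin, hne⟩ s (by omega)
      rw [this] at hnel
      simp at hnel
    constructor
    · exact bCnt_eq_one (by omega) (hMdsurv s) hyD
    · exact bCnt_eq_one (by omega) (hMesurv s) hyE
  obtain ⟨S, hS⟩ := hStage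
  -- the rfind predicate
  set pval : ℕ → ℕ := fun s => pBval c e1 (Nat.pair (Nat.pair a s) (κs s)) with hpval
  have hqacc : ∀ s : ℕ, qbd (Nat.pair (Nat.pair a s) (κs s)) = bd ∧
      qbe (Nat.pair (Nat.pair a s) (κs s)) = be := by
    intro s
    constructor <;> simp [qbd, qbe, qn, qa, qm, ha, hnn, Nat.unpair_pair]
  have hpval_eq : ∀ s, pval s =
      (bif (bCnt (bd+1) (survP c e1 (Nat.pair (Nat.pair (κs s) s) (Nat.pair σ d))) == 1) &&
           (bCnt (be+1) (survP c e1 (Nat.pair (Nat.pair (κs s) s) (Nat.pair σ e))) == 1)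
       then 0 else 1) := by
    intro s
    show pBval c e1 (Nat.pair (Nat.pair a s) (κs s)) = _
    unfold pBval
    rw [(hqacc s).1, (hqacc s).2, huD s, huE s]
  have hpvalS : pval S = 0 := by
    rw [hpval_eq S]
    obtain ⟨h1, h2⟩ := hS S (le_refl S)
    rw [h1, h2]
    rfl
  -- the rfind predicate as a partial function
  set p' : ℕ →. Bool := fun n => (fun m => m = 0) <$>
    (fun m => (↑(pBval c e1) : ℕ →. ℕ) (Nat.pair m (seg Kp (QB e1 m)))) (Nat.pair a n) with hp'
  have hp'val : ∀ n, p' n = Part.some (decide (pval n = 0)) := by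
    intro n
    rw [hp']
    simp only [PFun.coe_val, Part.map_eq_map, Part.map_some]
    rfl
  have hrdom : (Nat.rfind p').Dom := by
    rw [Nat.rfind_dom]
    refine ⟨S, ?_, ?_⟩
    · rw [hp'val S, hpvalS]
      exact Part.mem_some_iff.2 (by simp)
    · intro m _
      rw [hp'val m]
      trivial
  set s0 : ℕ := (Nat.rfind p').get hrdom with hs0
  have hs0mem : s0 ∈ Nat.rfind p' := Part.get_mem hrdom
  have hps0 : pval s0 = 0 := by
    have hsp := Nat.rfind_spec hs0mem
    rw [hp'val s0] at hsp
    have := Part.mem_some_iff.1 hsp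
    exact of_decide_eq_true this.symm
  -- counts are 1 at stage s0
  have hcond : ((bCnt (bd+1) (survP c e1 (Nat.pair (Nat.pair (κs s0) s0) (Nat.pair σ d))) == 1) &&
      (bCnt (be+1) (survP c e1 (Nat.pair (Nat.pair (κs s0) s0) (Nat.pair σ e))) == 1)) = true := by
    by_contra hcon
    rw [Bool.not_eq_true] at hcon
    rw [hpval_eq s0, hcon] at hps0
    simp at hps0
  rw [Bool.and_eq_true] at hcond
  have hcnt1 : bCnt (bd+1) (survP c e1 (Nat.pair (Nat.pair (κs s0) s0) (Nat.pair σ d))) = 1 := by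
    have := hcond.1
    simpa using this
  have hcnt2 : bCnt (be+1) (survP c e1 (Nat.pair (Nat.pair (κs s0) s0) (Nat.pair σ e))) = 1 := by
    have := hcond.2
    simpa using this
  have hpickD : bPick (bd+1) (survP c e1 (Nat.pair (Nat.pair (κs s0) s0) (Nat.pair σ d))) = Md :=
    bPick_eq (by omega) (hMdsurv s0)
      (fun j hj hpj => bCnt_one_unique hcnt1 (by omega) (hMdsurv s0) j hj hpj)
  have hpickE : bPick (be+1) (survP c e1 (Nat.pair (Nat.pair (κs s0) s0) (Nat.pair σ e))) = Me :=
    bPick_eq (by omega) (hMesurv s0)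
      (fun j hj hpj => bCnt_one_unique hcnt2 (by omega) (hMesurv s0) j hj hpj)
  have hpost_eq : postval c e1 (Nat.pair (Nat.pair a s0) (κs s0)) =
      (bif (Md == Me) then 1 else 0) := by
    unfold postval
    rw [(hqacc s0).1, (hqacc s0).2, huD s0, huE s0, hpickD, hpickE]
  have hval : postval c e1 (Nat.pair (Nat.pair a s0) (κs s0)) = indN eqSet w := by
    rw [hpost_eq]
    by_cases heqq : stdNumbering d = stdNumbering e
    · have hMdMe : Md = Me := by rw [hMd, hMe, heqq]
      have hwmem : w ∈ eqSet := by
        show stdNumbering w.unpair.1 = stdNumbering w.unpair.2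
        rw [← hd, ← he]
        exact heqq
      rw [hMdMe, indN_one_of hwmem]
      simp
    · have hMdMe : Md ≠ Me := by
        intro hcc
        apply heqq
        rw [← hMd_eq, ← hMe_eq, hcc]
      have hwmem : w ∉ eqSet := by
        intro hmem
        apply heqq
        rw [hd, he]
        exact hmem
      rw [indN_zero_of hwmem]
      have : (Md == Me) = false := by
        simp [hMdMe]
      rw [this]
      rfl
  -- assemble the final Part value
  rw [chi_eq, Part.eq_some_iff]
  simp only [PFun.coe_val, Part.bind_eq_bind]
  refine Part.mem_bind_iff.2 ⟨nn, ?_, ?_⟩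
  · rw [Part.mem_some_iff, hnn, hbd, hbe, hd, he]
  · have haeq : Nat.pair nn (seg (MINset φ) (HB nn)) = a := by rw [ha, hσ]
    simp only [haeq]
    refine Part.mem_bind_iff.2 ⟨Nat.pair a s0, ?_, ?_⟩
    · simp only [PFun.coe_val, id, Seq.seq, Part.map_eq_map, Part.map_some,
        Part.bind_eq_bind, Part.bind_some]
      exact Part.mem_map (Nat.pair a) hs0mem
    · rw [Part.mem_some_iff]
      exact hval.symm

end Meyer8


/-- For every computably bounded numbering, `MIN_φ` is Turing equivalent to
the set `{⟨d,e⟩ : ψ_d = ψ_e}` (hence to the double jump of the empty set). -/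
theorem MIN_turing_equiv_eqSet
    (φ : ℕ → ℕ →. ℕ) (hφ : Numbering' φ) (hcb : ComputablyBounded φ) :
    TuringLE (MINset φ) eqSet ∧ TuringLE eqSet (MINset φ) :=
  ⟨Meyer4.dir1 φ hφ, Meyer8.dir2 φ hφ hcb⟩
end
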